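/- arXiv:2110.07273 — 4 statements merged into one kernel-verified Lean document; each statement's English description precedes it below -/
import Mathlib

section
/- Assume P is reflexive and vertex-spanning. Let L ≤ ℤ^d be the subgroup generated by the extreme points of P^∨, and let L* := {y ∈ ℝ^d : ⟨x, y⟩ ∈ ℤ for all x ∈ L}. Then (P^∨)^∨ = P, and the subgroup of L* generated by the extreme points of (P^∨)^∨ is exactly ℤ^d. (That is, the primitive dual of the primitive dual of P is P: primitive duality is a duality on vertex-spanning reflexive polytopes.) -/
/-- The subgroup of `ℝ^d` consisting of vectors with integer coordinates (the lattice `ℤ^d`). -/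
def intLat (d : ℕ) : AddSubgroup (Fin d → ℝ) where
  carrier := {x | ∀ i, ∃ m : ℤ, x i = m}
  zero_mem' := fun i => ⟨0, by simp⟩
  add_mem' := by
    rintro x y hx hy i
    obtain ⟨a, ha⟩ := hx i
    obtain ⟨b, hb⟩ := hy i
    exact ⟨a + b, by simp [ha, hb]⟩
  neg_mem' := by
    rintro x hx i
    obtain ⟨a, ha⟩ := hx i
    exact ⟨-a, by simp [ha]⟩

/-- The polar dual `P^∨ = {y : ⟨x,y⟩ ≥ -1 for all x ∈ P}`. -/
def polarDual {d : ℕ} (P : Set (Fin d → ℝ)) : Set (Fin d → ℝ) :=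
  {y | ∀ x ∈ P, -1 ≤ ∑ i, x i * y i}

/-- The bipolar theorem for our one-sided polar dual: if `P` is a compact convex
set (hull of a finite set) with `0` in its interior, then `(P^∨)^∨ = P`. -/
theorem polarDual_polarDual_eq {d : ℕ} (S : Set (Fin d → ℝ)) (hSfin : S.Finite)
    (P : Set (Fin d → ℝ)) (hP : P = convexHull ℝ S)
    (h0 : 0 ∈ interior P) : polarDual (polarDual P) = P := by
  apply Set.Subset.antisymm
  · intro z hz
    by_contra hzP
    obtain ⟨f, u, hfu, huz⟩ := geometric_hahn_banach_closed_point
      (hP ▸ convex_convexHull ℝ S) (hP ▸ (hSfin.isCompact_convexHull ℝ).isClosed) hzP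
    have h0P : (0 : Fin d → ℝ) ∈ P := interior_subset h0
    have hu : 0 < u := by simpa using hfu 0 h0P
    have key : ∀ x : Fin d → ℝ, f x = ∑ i, x i * f (Pi.single i 1) := by
      intro x
      conv_lhs => rw [← Finset.univ_sum_single x]
      rw [map_sum]
      refine Finset.sum_congr rfl fun i _ => ?_
      set e : Fin d → ℝ := Pi.single i 1 with he
      have h1 : Pi.single i (x i) = x i • e := by
        funext j
        simp only [he, Pi.smul_apply, Pi.single_apply, smul_eq_mul]
        split <;> simp
      rw [h1, map_smul, smul_eq_mul]
    set y : Fin d → ℝ := fun i => -(f (Pi.single i 1)) / u with hy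
    have hsum : ∀ x : Fin d → ℝ, ∑ i, x i * y i = -(f x) / u := by
      intro x
      calc ∑ i, x i * y i = ∑ i, -(x i * f (Pi.single i 1)) / u :=
            Finset.sum_congr rfl fun i _ => by simp only [hy]; ring
        _ = -(f x) / u := by rw [key x, ← Finset.sum_div, Finset.sum_neg_distrib]
    have hyP : y ∈ polarDual P := by
      intro x hx
      rw [hsum, neg_div, neg_le_neg_iff, div_le_one hu]
      exact (hfu x hx).le
    have hle := hz y hyP
    rw [show ∑ i, y i * z i = ∑ i, z i * y i from Finset.sum_congr rfl fun i _ => mul_comm _ _,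
      hsum, neg_div] at hle
    have h1 : f z ≤ u := (div_le_one hu).mp (by linarith)
    linarith
  · intro x hx y hy
    calc (-1:ℝ) ≤ ∑ i, x i * y i := hy x hx
    _ = ∑ i, y i * x i := Finset.sum_congr rfl fun i _ => mul_comm _ _

/-- For a reflexive, vertex-spanning lattice polytope `P` (with `0` in its
interior), one has `(P^∨)^∨ = P`, the extreme points of `(P^∨)^∨` lie in the dual lattice
`L*` of the lattice `L` spanned by the vertices of `P^∨`, and they generate exactly `ℤ^d`:
primitive duality is a duality on vertex-spanning reflexive polytopes. -/
theorem primitive_duality_is_duality (d : ℕ) (hd : 1 ≤ d)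
    (S : Set (Fin d → ℝ)) (hSfin : S.Finite) (hSint : ∀ x ∈ S, ∀ i, ∃ m : ℤ, x i = m)
    (P : Set (Fin d → ℝ)) (hP : P = convexHull ℝ S)
    (h0 : 0 ∈ interior P)
    (hreflexive : ∀ y ∈ Set.extremePoints ℝ (polarDual P), ∀ i, ∃ m : ℤ, y i = m)
    (hspan : AddSubgroup.closure (Set.extremePoints ℝ P) = intLat d)
    (L : AddSubgroup (Fin d → ℝ))
    (hL : L = AddSubgroup.closure (Set.extremePoints ℝ (polarDual P)))
    (Lstar : Set (Fin d → ℝ))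
    (hLstar : Lstar = {y | ∀ x ∈ L, ∃ m : ℤ, (∑ i, x i * y i) = m}) :
    polarDual (polarDual P) = P ∧
    Set.extremePoints ℝ (polarDual (polarDual P)) ⊆ Lstar ∧
    AddSubgroup.closure (Set.extremePoints ℝ (polarDual (polarDual P))) = intLat d := by
  have hbip : polarDual (polarDual P) = P := polarDual_polarDual_eq S hSfin P hP h0
  refine ⟨hbip, ?_, by rw [hbip]; exact hspan⟩
  rw [hbip, hLstar]
  intro x hx
  -- `x` is an extreme point of `P`, hence has integer coordinates by `hspan`
  have hx_int : ∀ i, ∃ m : ℤ, x i = m := by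
    have hxm : x ∈ AddSubgroup.closure (Set.extremePoints ℝ P) :=
      AddSubgroup.subset_closure hx
    rw [hspan] at hxm
    exact hxm
  -- every element of `L` has integer coordinates
  have hLmem : ∀ v ∈ L, ∀ i, ∃ m : ℤ, v i = m := by
    have hle : L ≤ intLat d := by
      rw [hL]
      exact (AddSubgroup.closure_le _).mpr fun y hy => hreflexive y hy
    exact fun v hv => hle hv
  intro v hv
  choose m hm using hLmem v hv
  choose n hn using hx_int
  refine ⟨∑ i, m i * n i, ?_⟩
  push_cast
  exact Finset.sum_congr rfl fun i _ => by rw [hm i, hn i]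
end

section
/- For every crossing diagram c: the set of paths of c has exactly n elements, and every arrow A ∈ LQ₁ is contained in E(λ) for exactly one path λ of c. (That is, the paths of a crossing diagram form a 1-covering of the ladder quiver.) -/
/-- `lam : ℕ → ℕ` is a partition in the `r × (n-r)` box, with the conventions
`lam 0 = n - r` and `lam t = 0` for `t > r` built in. -/
def IsPartition (n r : ℕ) (lam : ℕ → ℕ) : Prop :=
  lam 0 = n - r ∧ (∀ t, r < t → lam t = 0) ∧ ∀ t, lam (t + 1) ≤ lam t

/-- The edge set `E(λ)` of the monotone lattice path of the partition `λ`. -/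
def pathEdges (r : ℕ) (lam : ℕ → ℕ) : Set ((ℕ × ℕ) × Bool) :=
  {e | (∃ t, 1 ≤ t ∧ t ≤ r ∧ e = ((lam t, r - t), true)) ∨
       (∃ t x, t ≤ r ∧ lam (t + 1) ≤ x ∧ x + 1 ≤ lam t ∧ e = ((x, r - t), false))}

/-- The ladder vertices `V = {(0,0), (k,r)} ∪ {1,…,k-1} × {1,…,r-1}`. -/
def ladderV (n r : ℕ) : Set (ℕ × ℕ) :=
  {(0, 0), (n - r, r)} ∪ {p | 1 ≤ p.1 ∧ p.1 + 1 ≤ n - r ∧ 1 ≤ p.2 ∧ p.2 + 1 ≤ r}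

/-- The internal ladder vertices `V° = {1,…,k-1} × {1,…,r-1}`. -/
def internalV (n r : ℕ) : Set (ℕ × ℕ) :=
  {p | 1 ≤ p.1 ∧ p.1 + 1 ≤ n - r ∧ 1 ≤ p.2 ∧ p.2 + 1 ≤ r}

/-- `A` is an arrow of the ladder quiver. -/
def IsArrow (n r : ℕ) (A : Set ((ℕ × ℕ) × Bool)) : Prop :=
  ∃ (len : ℕ) (z : ℕ → ℕ × ℕ),
    0 < len ∧
    (∀ i < len, z (i + 1) = ((z i).1 + 1, (z i).2) ∨ z (i + 1) = ((z i).1, (z i).2 + 1)) ∧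
    (∀ i ≤ len, (z i).1 ≤ n - r ∧ (z i).2 ≤ r) ∧
    z 0 ∈ ladderV n r ∧ z len ∈ ladderV n r ∧
    (∀ i, 0 < i → i < len → z i ∉ ladderV n r) ∧
    A = {e | ∃ i < len,
          (z (i + 1) = ((z i).1 + 1, (z i).2) ∧ e = (z i, false)) ∨
          (z (i + 1) = ((z i).1, (z i).2 + 1) ∧ e = (z i, true))}

/-- The two endpoints of an edge. -/
def edgePts (e : (ℕ × ℕ) × Bool) : Set (ℕ × ℕ) :=
  {e.1, if e.2 then (e.1.1, e.1.2 + 1) else (e.1.1 + 1, e.1.2)}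

/-- `λ` is a path of the crossing diagram `c : V° → {X, O}` (here `true = X`, `false = O`):
at every internal vertex met by `E(λ)`, the path goes straight through if the label is `X`
and turns if the label is `O`. -/
def IsCrossingPath (n r : ℕ) (c : ℕ × ℕ → Bool) (lam : ℕ → ℕ) : Prop :=
  ∀ p ∈ internalV n r,
    (c p = true → ∀ e ∈ pathEdges r lam, p ∈ edgePts e →
      ∀ f ∈ pathEdges r lam, p ∈ edgePts f → e.2 = f.2) ∧
    (c p = false → ∀ e ∈ pathEdges r lam, p ∈ edgePts e →
      ∀ f ∈ pathEdges r lam, p ∈ edgePts f → e ≠ f → e.2 ≠ f.2)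

namespace CDOC

open Classical in
/-- first `x` with `m ≤ x < k` and `c (x,y) = false`, else `k`; here `k = n - r`. -/
noncomputable def ffn (k : ℕ) (c : ℕ × ℕ → Bool) (y m : ℕ) : ℕ :=
  if h : ∃ x, m ≤ x ∧ x < k ∧ c (x, y) = false then Nat.find h else k

/-- greatest `x ≤ a - 1` with `c (x,y) = false`, else `0`. -/
def pfn (c : ℕ × ℕ → Bool) (y a : ℕ) : ℕ :=
  Nat.findGreatest (fun x => c (x, y) = false) (a - 1)

lemma ffn_cases (k c y m) :
    (ffn k c y m = k ∧ ∀ x, m ≤ x → x < k → c (x, y) = true) ∨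
    (m ≤ ffn k c y m ∧ ffn k c y m < k ∧ c (ffn k c y m, y) = false ∧
      ∀ x, m ≤ x → x < ffn k c y m → c (x, y) = true) := by
  unfold ffn; split
  · next h =>
    obtain ⟨h1, h2, h3⟩ := Nat.find_spec h
    right
    refine ⟨h1, h2, h3, fun x hmx hx => ?_⟩
    have hmin := Nat.find_min h hx
    cases hcb : c (x, y) with
    | false => exact absurd ⟨hmx, by omega, hcb⟩ hmin
    | true => rfl
  · next h =>
    push_neg at h
    left
    refine ⟨rfl, fun x h1 h2 => ?_⟩
    cases hcb : c (x, y) with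
    | false => exact absurd hcb (h x h1 h2)
    | true => rfl

lemma ffn_le (k c y m) : ffn k c y m ≤ k := by
  rcases ffn_cases k c y m with h | h
  · omega
  · omega

lemma ffn_ge (k c y m) (hm : m ≤ k) : m ≤ ffn k c y m := by
  rcases ffn_cases k c y m with h | h <;> omega

lemma ffn_true (k c y m) : ∀ x, m ≤ x → x < ffn k c y m → c (x, y) = true := by
  intro x h1 h2
  rcases ffn_cases k c y m with h | h
  · exact h.2 x h1 (by omega)
  · exact h.2.2.2 x h1 h2

lemma ffn_false (k c y m) (h : ffn k c y m < k) : c (ffn k c y m, y) = false := by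
  rcases ffn_cases k c y m with h' | h'
  · omega
  · exact h'.2.2.1

lemma ffn_eq (k c y m a) (hma : m ≤ a) (hak : a ≤ k)
    (htrue : ∀ x, m ≤ x → x < a → c (x, y) = true)
    (hfa : a < k → c (a, y) = false) : ffn k c y m = a := by
  rcases lt_trichotomy (ffn k c y m) a with h | h | h
  · have h1 := ffn_false k c y m (by omega)
    have h2 := htrue _ (ffn_ge k c y m (by omega)) h
    rw [h1] at h2; exact absurd h2 (by simp)
  · exact h
  · have hak' : a < k := by have := ffn_le k c y m; omega
    have h1 := hfa hak'
    have h2 := ffn_true k c y m a hma h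
    rw [h1] at h2; exact absurd h2 (by simp)

lemma pfn_le (c y a) : pfn c y a ≤ a - 1 :=
  Nat.findGreatest_le (a - 1)

lemma pfn_lt (c y a) (ha : 1 ≤ a) : pfn c y a < a := by
  have := pfn_le c y a; omega

lemma pfn_false (c y a) (h : 1 ≤ pfn c y a) : c (pfn c y a, y) = false := by
  have : pfn c y a ≠ 0 := by omega
  exact Nat.findGreatest_of_ne_zero rfl this

lemma pfn_true (c y a) : ∀ x, pfn c y a < x → x < a → c (x, y) = true := by
  intro x h1 h2
  have hx : x ≤ a - 1 := by omega
  have := Nat.findGreatest_is_greatest (P := fun x => c (x, y) = false) h1 hx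
  cases hcb : c (x, y) with
  | false => exact absurd hcb this
  | true => rfl

lemma pfn_eq (c y a b) (hba : b < a)
    (hb : b = 0 ∨ c (b, y) = false)
    (htrue : ∀ x, b < x → x < a → c (x, y) = true) : pfn c y a = b := by
  rcases lt_trichotomy (pfn c y a) b with h | h | h
  · rcases hb with hb | hb
    · omega
    · have hx : b ≤ a - 1 := by omega
      have := Nat.findGreatest_is_greatest (P := fun x => c (x, y) = false) h hx
      exact absurd hb this
  · exact h
  · have h1 := pfn_false c y a (by omega)
    have h2 := htrue _ h (pfn_lt c y a (by omega))
    rw [h1] at h2; exact absurd h2 (by simp)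

lemma pfn_lt_of (c y a m) (hm : 1 ≤ m)
    (htrue : ∀ x, m ≤ x → x < a → c (x, y) = true) : pfn c y a < m := by
  by_contra h
  push_neg at h
  have h1 := pfn_false c y a (by omega)
  have h2 : pfn c y a < a := by
    rcases Nat.eq_zero_or_pos a with h' | h'
    · have := pfn_le c y a; omega
    · exact pfn_lt c y a h'
  have := htrue _ h h2
  rw [h1] at this; exact absurd this (by simp)

/-- forward step through row `y`. -/
noncomputable def nxt (k : ℕ) (c : ℕ × ℕ → Bool) (y b : ℕ) : ℕ :=
  if b = 0 then 0 else if k ≤ b then k else if c (b, y) then b else ffn k c y (b + 1)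

/-- backward step through row `y`. -/
noncomputable def prv (k : ℕ) (c : ℕ × ℕ → Bool) (y a : ℕ) : ℕ :=
  if a = 0 then 0 else if a < k ∧ c (a, y) = true then a else pfn c y a

/-- local compatibility with the crossing diagram at row `y`:
`a` is the value above, `b` the value below. -/
def RowOK (k : ℕ) (c : ℕ × ℕ → Bool) (y a b : ℕ) : Prop :=
  (∀ x, b < x → x < a → c (x, y) = true) ∧
  (1 ≤ b → b < a → c (b, y) = false) ∧
  (b < a → a < k → c (a, y) = false) ∧
  (a = b → 1 ≤ a → a < k → c (a, y) = true)

lemma nxt_ge (k c y b) (h : b ≤ k) : b ≤ nxt k c y b := by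
  unfold nxt
  split; · omega
  split; · omega
  split; · exact le_rfl
  · have := ffn_ge k c y (b + 1) (by omega); omega

lemma nxt_le (k c y b) : nxt k c y b ≤ k := by
  unfold nxt
  split; · omega
  split; · exact le_rfl
  split; · omega
  · exact ffn_le k c y (b + 1)

lemma prv_le (k c y a) : prv k c y a ≤ a := by
  unfold prv
  split; · omega
  split; · exact le_rfl
  · rcases Nat.eq_zero_or_pos a with h | h
    · omega
    · exact le_of_lt (pfn_lt c y a h)

lemma rowOK_nxt (k c y b) (hb : b ≤ k) : RowOK k c y (nxt k c y b) b := by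
  unfold nxt RowOK
  split
  · next h => subst h; refine ⟨by omega, by omega, by omega, by omega⟩
  split
  · next h => refine ⟨by omega, by omega, by omega, by omega⟩
  next h1 h2 =>
  split
  · next h3 => exact ⟨by omega, by omega, by omega, fun _ _ _ => h3⟩
  · next h3 =>
    have hge := ffn_ge k c y (b + 1) (by omega)
    refine ⟨fun x hx1 hx2 => ffn_true k c y (b+1) x (by omega) hx2,
      fun _ _ => by simpa using h3,
      fun _ hlt => ffn_false k c y (b+1) hlt,
      fun heq _ _ => by omega⟩

lemma rowOK_prv (k c y a) (ha : a ≤ k) : RowOK k c y a (prv k c y a) := by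
  unfold prv RowOK
  split
  · next h => subst h; refine ⟨by omega, by omega, by omega, by omega⟩
  next h0 =>
  split
  · next h => refine ⟨by omega, by omega, fun h1 h2 => by omega, fun _ _ _ => h.2⟩
  · next h =>
    have hlt : pfn c y a < a := pfn_lt c y a (by omega)
    refine ⟨fun x hx1 hx2 => pfn_true c y a x hx1 hx2,
      fun h1 _ => pfn_false c y a h1,
      fun _ hak => ?_,
      fun heq _ _ => by omega⟩
    cases hcb : c (a, y) with
    | false => rfl
    | true => exact absurd ⟨hak, hcb⟩ h

/-- forward determinism. -/
lemma rowOK_FD (k c y a b) (hOK : RowOK k c y a b) (hb : 1 ≤ b) (hba : b ≤ a)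
    (hak : a ≤ k) : a = nxt k c y b := by
  obtain ⟨h1, h2, h3, h4⟩ := hOK
  unfold nxt
  split; · omega
  split; · next h => omega
  next hb0 hbk =>
  split
  · next hc =>
    by_contra hne
    have := h2 hb (by omega)
    rw [this] at hc; exact absurd hc (by simp)
  · next hc =>
    have hba' : b < a := by
      rcases Nat.eq_or_lt_of_le hba with h | h
      · exfalso; have := h4 h.symm (by omega) (by omega); rw [h] at hc; exact hc this
      · exact h
    exact (ffn_eq k c y (b+1) a (by omega) hak (fun x hx1 hx2 => h1 x (by omega) hx2)
      (h3 hba')).symm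

/-- backward determinism below `k`. -/
lemma rowOK_BD (k c y a b) (hOK : RowOK k c y a b) (hba : b ≤ a)
    (hak : a < k) : b = prv k c y a := by
  obtain ⟨h1, h2, h3, h4⟩ := hOK
  unfold prv
  split; · omega
  next h0 =>
  split
  · next hc =>
    by_contra hne
    have hblt : b < a := by omega
    have := h3 hblt hak
    rw [this] at hc; exact absurd hc.2 (by simp)
  · next hc =>
    have hc' : c (a, y) = false := by
      cases hcb : c (a, y) with
      | false => rfl
      | true => exact absurd ⟨hak, hcb⟩ hc
    have hblt : b < a := by
      rcases Nat.eq_or_lt_of_le hba with h | h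
      · exfalso; have := h4 h.symm (by omega) hak; rw [hc'] at this
        exact absurd this (by simp)
      · exact h
    refine (pfn_eq c y a b hblt ?_ h1).symm
    rcases Nat.eq_zero_or_pos b with h | h
    · exact Or.inl h
    · exact Or.inr (h2 h hblt)

/-- backward determinism knowing a horizontal edge at column `x`. -/
lemma rowOK_BD2 (k c y a b x) (hOK : RowOK k c y a b) (hbx : b ≤ x) (hxa : x < a)
    (hak : a ≤ k) : b = pfn c y (x + 1) ∧ a = ffn k c y (x + 1) := by
  obtain ⟨h1, h2, h3, h4⟩ := hOK
  constructor
  · refine (pfn_eq c y (x+1) b (by omega) ?_ (fun z hz1 hz2 => h1 z hz1 (by omega))).symm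
    rcases Nat.eq_zero_or_pos b with h | h
    · exact Or.inl h
    · exact Or.inr (h2 h (by omega))
  · exact (ffn_eq k c y (x+1) a (by omega) hak (fun z hz1 hz2 => h1 z (by omega) hz2)
      (h3 (by omega))).symm

lemma prv_ffn_lt (k c y m) (hm : 1 ≤ m) (hmk : m ≤ k) : prv k c y (ffn k c y m) < m := by
  have hge := ffn_ge k c y m hmk
  unfold prv
  split; · omega
  split
  · next h =>
    have := ffn_false k c y m h.1
    rw [this] at h; exact absurd h.2 (by simp)
  · exact pfn_lt_of c y (ffn k c y m) m hm (fun x hx1 hx2 => ffn_true k c y m x hx1 hx2)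

section
variable (k r : ℕ) (c : ℕ × ℕ → Bool)

/-- abstract "partition + all rows compatible" predicate. -/
def POK (lam : ℕ → ℕ) : Prop :=
  lam 0 = k ∧ (∀ t, r < t → lam t = 0) ∧ (∀ t, lam (t + 1) ≤ lam t) ∧
  ∀ t, 1 ≤ t → t + 1 ≤ r → RowOK k c (r - t) (lam t) (lam (t + 1))

variable {k r c}

lemma POK.anti {lam} (h : POK k r c lam) : ∀ u v : ℕ, u ≤ v → lam v ≤ lam u := by
  intro u v huv
  induction v with
  | zero => have : u = 0 := by omega
            rw [this]
  | succ w ih =>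
    rcases Nat.eq_or_lt_of_le huv with h' | h'
    · rw [h']
    · exact le_trans (h.2.2.1 w) (ih (by omega))

lemma POK.le_k {lam} (h : POK k r c lam) (u : ℕ) : lam u ≤ k := by
  have h0 := h.1
  have := h.anti 0 u (Nat.zero_le u); omega

end

noncomputable def upIt (k r : ℕ) (c : ℕ × ℕ → Bool) (t x : ℕ) : ℕ → ℕ
  | 0 => x
  | i + 1 => nxt k c (r - t + i + 1) (upIt k r c t x i)

noncomputable def dnIt (k r : ℕ) (c : ℕ × ℕ → Bool) (t x : ℕ) : ℕ → ℕ
  | 0 => x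
  | i + 1 => prv k c (r - t - i) (dnIt k r c t x i)

/-- The unique compatible path through `lam t = x`. -/
noncomputable def lamT (k r : ℕ) (c : ℕ × ℕ → Bool) (t x : ℕ) : ℕ → ℕ := fun u =>
  if u = 0 then k else if r < u then 0 else if u ≤ t then upIt k r c t x (t - u)
  else dnIt k r c t x (u - t)

section
variable {k r : ℕ} {c : ℕ × ℕ → Bool} {t x : ℕ}

lemma upIt_le_k (hx : x ≤ k) (i : ℕ) : upIt k r c t x i ≤ k := by
  cases i with
  | zero => exact hx
  | succ j => exact nxt_le k c _ _

lemma upIt_mono (hx : x ≤ k) (i : ℕ) : upIt k r c t x i ≤ upIt k r c t x (i + 1) := by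
  cases i with
  | zero => exact nxt_ge k c _ _ hx
  | succ j => exact nxt_ge k c _ _ (nxt_le k c _ _)

lemma upIt_zero (i : ℕ) : upIt k r c t 0 i = 0 := by
  induction i with
  | zero => rfl
  | succ j ih => show nxt k c _ _ = 0; rw [ih]; unfold nxt; simp

lemma upIt_k (i : ℕ) : upIt k r c t k i = k := by
  induction i with
  | zero => rfl
  | succ j ih => show nxt k c _ _ = k; rw [ih]; unfold nxt; split <;> simp_all

lemma dnIt_le (i : ℕ) : dnIt k r c t x (i + 1) ≤ dnIt k r c t x i := prv_le k c _ _

lemma dnIt_le_x (i : ℕ) : dnIt k r c t x i ≤ x := by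
  induction i with
  | zero => exact le_rfl
  | succ j ih => exact le_trans (dnIt_le j) ih

lemma dnIt_zero_of (i : ℕ) (h : dnIt k r c t x i = 0) (j : ℕ) (hij : i ≤ j) :
    dnIt k r c t x j = 0 := by
  induction j with
  | zero => have : i = 0 := by omega
            rw [this] at h; exact h
  | succ m ih =>
    rcases Nat.eq_or_lt_of_le hij with h' | h'
    · rw [← h']; exact h
    · have := ih (by omega)
      show prv k c _ _ = 0
      rw [this]; unfold prv; simp

lemma lamT_zero : lamT k r c t x 0 = k := by unfold lamT; simp

lemma lamT_gt (u : ℕ) (h : r < u) : lamT k r c t x u = 0 := by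
  unfold lamT; rw [if_neg (by omega), if_pos h]

lemma lamT_up (u : ℕ) (h1 : 1 ≤ u) (h2 : u ≤ t) (h3 : u ≤ r) :
    lamT k r c t x u = upIt k r c t x (t - u) := by
  unfold lamT; rw [if_neg (by omega), if_neg (by omega), if_pos h2]

lemma lamT_dn (u : ℕ) (h1 : t < u) (h3 : u ≤ r) :
    lamT k r c t x u = dnIt k r c t x (u - t) := by
  unfold lamT; rw [if_neg (by omega), if_neg (by omega), if_neg (by omega)]

lemma lamT_self (h1 : 1 ≤ t) (h3 : t ≤ r) : lamT k r c t x t = x := by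
  rw [lamT_up t h1 le_rfl h3]; simp [upIt]

lemma lamT_succ (h1 : 1 ≤ t) (h3 : t + 1 ≤ r) :
    lamT k r c t x (t + 1) = prv k c (r - t) x := by
  rw [lamT_dn (t + 1) (by omega) h3]
  show dnIt k r c t x (t + 1 - t) = _
  have : t + 1 - t = 1 := by omega
  rw [this]
  show prv k c (r - t - 0) x = _
  simp

lemma lamT_POK (h1 : 1 ≤ t) (h2 : t ≤ r) (hx : x ≤ k) : POK k r c (lamT k r c t x) := by
  have hup : ∀ i, upIt k r c t x i ≤ k := upIt_le_k hx
  have hdn : ∀ i, dnIt k r c t x i ≤ k := fun i => le_trans (dnIt_le_x i) hx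
  refine ⟨lamT_zero, lamT_gt, ?_, ?_⟩
  · -- monotone
    intro u
    rcases Nat.lt_or_ge r (u + 1) with h | h
    · rw [lamT_gt (u+1) h]; omega
    · -- u + 1 ≤ r
      rcases Nat.eq_zero_or_pos u with h0 | h0
      · subst h0
        rw [lamT_zero]
        rcases Nat.lt_or_ge t 1 with h' | h'
        · rw [lamT_dn 1 (by omega) (by omega)]; exact hdn _
        · rw [lamT_up 1 le_rfl h' (by omega)]; exact hup _
      rcases Nat.lt_or_ge u t with hut | hut
      · -- u + 1 ≤ t : both up
        rw [lamT_up u h0 (by omega) (by omega), lamT_up (u+1) (by omega) (by omega) h]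
        have hi : t - u = (t - (u + 1)) + 1 := by omega
        rw [hi]
        exact upIt_mono hx _
      · rcases Nat.eq_or_lt_of_le hut with hut' | hut'
        · -- u = t
          subst hut'
          rw [lamT_up t h0 le_rfl (by omega), lamT_dn (t+1) (by omega) h]
          have e1 : t - t = 0 := by omega
          have e2 : t + 1 - t = 1 := by omega
          rw [e1, e2]
          have := dnIt_le_x (k := k) (r := r) (c := c) (t := t) (x := x) 1
          simpa [upIt] using this
        · -- u > t: both down
          rw [lamT_dn u hut' (by omega), lamT_dn (u+1) (by omega) h]
          have : u + 1 - t = (u - t) + 1 := by omega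
          rw [this]
          exact dnIt_le _
  · -- rows
    intro u hu1 hu2
    rcases Nat.lt_or_ge u t with hut | hut
    · -- u + 1 ≤ t: RowOK via nxt
      rw [lamT_up u hu1 (by omega) (by omega), lamT_up (u+1) (by omega) (by omega) (by omega)]
      have hi : t - u = (t - (u + 1)) + 1 := by omega
      rw [hi]
      show RowOK k c (r - u) (nxt k c (r - t + (t - (u+1)) + 1) _) _
      have : r - t + (t - (u+1)) + 1 = r - u := by omega
      rw [this]
      exact rowOK_nxt k c _ _ (hup _)
    · rcases Nat.eq_or_lt_of_le hut with hut' | hut'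
      · -- u = t
        subst hut'
        rw [lamT_self h1 (by omega), lamT_succ h1 (by omega)]
        exact rowOK_prv k c _ _ hx
      · -- u > t: RowOK via prv
        rw [lamT_dn u hut' (by omega), lamT_dn (u+1) (by omega) (by omega)]
        have : u + 1 - t = (u - t - 1) + 1 + 1 := by omega
        rw [this]
        have h2' : u - t = (u - t - 1) + 1 := by omega
        conv_lhs => rw [h2']
        show RowOK k c (r - u) _ (prv k c (r - t - ((u - t - 1) + 1)) _)
        have : r - t - ((u - t - 1) + 1) = r - u := by omega
        rw [this]
        have : RowOK k c (r - u) (dnIt k r c t x ((u - t - 1) + 1))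
            (prv k c (r - u) (dnIt k r c t x ((u - t - 1) + 1))) :=
          rowOK_prv k c _ _ (hdn _)
        exact this

end

section
variable {k r : ℕ} {c : ℕ × ℕ → Bool}

/-- upward determinism. -/
lemma POK.up_det {lam lam'} (h : POK k r c lam) (h' : POK k r c lam') (t : ℕ)
    (heq : lam t = lam' t) (hpos : 1 ≤ lam t) :
    ∀ u, 1 ≤ u → u ≤ t → lam u = lam' u := by
  have htr : t ≤ r := by
    by_contra hc; push_neg at hc; have := h.2.1 t hc; omega
  suffices key : ∀ d u, u + d = t → 1 ≤ u → lam u = lam' u by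
    intro u h1 h2; exact key (t - u) u (by omega) h1
  intro d
  induction d with
  | zero => intro u hu _; rw [(by omega : u = t)]; exact heq
  | succ d ih =>
    intro u hu h1
    have hnext : lam (u + 1) = lam' (u + 1) := ih (u + 1) (by omega) (by omega)
    have hb1 : 1 ≤ lam (u + 1) := le_trans hpos (h.anti (u+1) t (by omega))
    have hOK := h.2.2.2 u h1 (by omega)
    have hOK' := h'.2.2.2 u h1 (by omega)
    have e1 := rowOK_FD k c (r - u) (lam u) (lam (u+1)) hOK hb1 (h.2.2.1 u) (h.le_k u)
    have e2 := rowOK_FD k c (r - u) (lam' u) (lam' (u+1)) hOK' (by omega) (h'.2.2.1 u)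
      (h'.le_k u)
    rw [e1, e2, hnext]

/-- downward determinism. -/
lemma POK.dn_det {lam lam'} (h : POK k r c lam) (h' : POK k r c lam') (t : ℕ)
    (ht : 1 ≤ t) (heq : lam t = lam' t) (hlt : lam t < k) :
    ∀ u, t ≤ u → lam u = lam' u := by
  intro u hu
  induction u, hu using Nat.le_induction with
  | base => exact heq
  | succ u hu ih =>
    rcases Nat.lt_or_ge u r with hur | hur
    · have hOK := h.2.2.2 u (by omega) (by omega)
      have hOK' := h'.2.2.2 u (by omega) (by omega)
      have hak : lam u < k := lt_of_le_of_lt (h.anti t u hu) hlt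
      have e1 := rowOK_BD k c (r - u) (lam u) (lam (u+1)) hOK (h.2.2.1 u) hak
      have e2 := rowOK_BD k c (r - u) (lam' u) (lam' (u+1)) hOK' (h'.2.2.1 u) (by omega)
      rw [e1, e2, ih]
    · rw [h.2.1 (u+1) (by omega), h'.2.1 (u+1) (by omega)]

/-- full determinism from one interior value. -/
lemma POK.unique_of_val {lam lam'} (h : POK k r c lam) (h' : POK k r c lam') (t : ℕ)
    (ht : 1 ≤ t) (heq : lam t = lam' t) (hpos : 1 ≤ lam t) (hlt : lam t < k) :
    lam = lam' := by
  funext u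
  rcases Nat.eq_zero_or_pos u with h0 | h0
  · subst h0; rw [h.1, h'.1]
  rcases le_or_gt u t with hu | hu
  · exact h.up_det h' t heq hpos u h0 hu
  · exact h.dn_det h' t ht heq hlt u (by omega)

/-- full determinism from a horizontal edge. -/
lemma POK.unique_of_horiz {lam lam'} (h : POK k r c lam) (h' : POK k r c lam') (t x : ℕ)
    (ht : 1 ≤ t) (htr : t + 1 ≤ r)
    (hb : lam (t+1) ≤ x) (ha : x < lam t) (hb' : lam' (t+1) ≤ x) (ha' : x < lam' t) :
    lam = lam' := by
  have hOK := h.2.2.2 t ht htr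
  have hOK' := h'.2.2.2 t ht htr
  obtain ⟨e1, e2⟩ := rowOK_BD2 k c (r - t) (lam t) (lam (t+1)) x hOK hb ha (h.le_k t)
  obtain ⟨e1', e2'⟩ := rowOK_BD2 k c (r - t) (lam' t) (lam' (t+1)) x hOK' hb' ha' (h'.le_k t)
  have heqt : lam t = lam' t := by rw [e2, e2']
  have heqt1 : lam (t+1) = lam' (t+1) := by rw [e1, e1']
  funext u
  rcases Nat.eq_zero_or_pos u with h0 | h0
  · subst h0; rw [h.1, h'.1]
  rcases le_or_gt u t with hu | hu
  · exact h.up_det h' t heqt (by omega) u h0 hu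
  · refine h.dn_det h' (t+1) (by omega) heqt1 ?_ u (by omega)
    have : pfn c (r - t) (x + 1) ≤ x := by have := pfn_le c (r - t) (x+1); omega
    have hxk : x < k := lt_of_lt_of_le ha (h.le_k t)
    omega

end

lemma part_anti {n r lam} (h : IsPartition n r lam) : ∀ u v : ℕ, u ≤ v → lam v ≤ lam u := by
  intro u v huv
  induction v with
  | zero => have : u = 0 := by omega
            rw [this]
  | succ w ih =>
    rcases Nat.eq_or_lt_of_le huv with h' | h'
    · rw [h']
    · exact le_trans (h.2.2 w) (ih (by omega))

lemma part_le_k {n r lam} (h : IsPartition n r lam) (u : ℕ) : lam u ≤ n - r := by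
  have h0 := h.1
  have := part_anti h 0 u (Nat.zero_le u); omega

/-- membership of a vertical edge. -/
lemma vert_mem_iff {r : ℕ} {lam : ℕ → ℕ} (q1 q2 : ℕ) :
    (((q1, q2), true) ∈ pathEdges r lam) ↔ ∃ t, 1 ≤ t ∧ t ≤ r ∧ lam t = q1 ∧ r - t = q2 := by
  constructor
  · rintro (⟨t, h1, h2, he⟩ | ⟨t, x, _, _, _, he⟩)
    · refine ⟨t, h1, h2, ?_, ?_⟩ <;>
      · simp only [Prod.mk.injEq] at he
        omega
    · simp at he
  · rintro ⟨t, h1, h2, h3, h4⟩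
    exact Or.inl ⟨t, h1, h2, by rw [← h3, ← h4]⟩

/-- membership of a horizontal edge. -/
lemma horiz_mem_iff {r : ℕ} {lam : ℕ → ℕ} (q1 q2 : ℕ) :
    (((q1, q2), false) ∈ pathEdges r lam) ↔
      ∃ t, t ≤ r ∧ lam (t + 1) ≤ q1 ∧ q1 + 1 ≤ lam t ∧ r - t = q2 := by
  constructor
  · rintro (⟨t, h1, h2, he⟩ | ⟨t, x, h1, h2, h3, he⟩)
    · simp at he
    · simp only [Prod.mk.injEq] at he
      exact ⟨t, h1, by omega, by omega, by omega⟩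
  · rintro ⟨t, h1, h2, h3, h4⟩
    exact Or.inr ⟨t, q1, h1, h2, h3, by rw [← h4]⟩

/-- the four possible edges of the path at an internal vertex. -/
lemma edge_at_char {r : ℕ} {lam : ℕ → ℕ} (x y : ℕ) (hx : 1 ≤ x) (hy1 : 1 ≤ y)
    (hy2 : y + 1 ≤ r) (e : (ℕ × ℕ) × Bool) :
    (e ∈ pathEdges r lam ∧ (x, y) ∈ edgePts e) ↔
      ((e = ((x, y), true) ∧ lam (r - y) = x) ∨
       (e = ((x, y - 1), true) ∧ lam (r - y + 1) = x) ∨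
       (e = ((x, y), false) ∧ lam (r - y + 1) ≤ x ∧ x + 1 ≤ lam (r - y)) ∨
       (e = ((x - 1, y), false) ∧ lam (r - y + 1) ≤ x - 1 ∧ x ≤ lam (r - y))) := by
  constructor
  · rintro ⟨hmem, hpt⟩
    obtain ⟨⟨e1, e2⟩, eb⟩ := e
    cases eb with
    | true =>
      rw [vert_mem_iff] at hmem
      obtain ⟨t, h1, h2, h3, h4⟩ := hmem
      simp [edgePts] at hpt
      rcases hpt with ⟨hpx, hpy⟩ | ⟨hpx, hpy⟩
      · left
        have ht : t = r - y := by omega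
        subst ht
        constructor
        · simp only [Prod.mk.injEq, eq_self_iff_true, and_true]; omega
        · omega
      · right; left
        have ht : t = r - y + 1 := by omega
        subst ht
        constructor
        · simp only [Prod.mk.injEq, eq_self_iff_true, and_true]; omega
        · omega
    | false =>
      rw [horiz_mem_iff] at hmem
      obtain ⟨t, h1, h2, h3, h4⟩ := hmem
      simp [edgePts] at hpt
      have ht : t = r - y := by omega
      subst ht
      rcases hpt with ⟨hpx, hpy⟩ | ⟨hpx, hpy⟩
      · right; right; left
        refine ⟨by simp only [Prod.mk.injEq, eq_self_iff_true, and_true]; omega, by omega, by omega⟩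
      · right; right; right
        refine ⟨by simp only [Prod.mk.injEq, eq_self_iff_true, and_true]; omega, by omega, by omega⟩
  · have hry : r - (r - y) = y := by omega
    rintro (⟨rfl, hv⟩ | ⟨rfl, hv⟩ | ⟨rfl, hv1, hv2⟩ | ⟨rfl, hv1, hv2⟩)
    · refine ⟨(vert_mem_iff _ _).2 ⟨r - y, by omega, by omega, by omega, by omega⟩, ?_⟩
      simp [edgePts]
    · refine ⟨(vert_mem_iff _ _).2 ⟨r - y + 1, by omega, by omega, by omega, by omega⟩, ?_⟩
      simp [edgePts, Prod.ext_iff]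
      omega
    · refine ⟨(horiz_mem_iff _ _).2 ⟨r - y, by omega, by omega, by omega, by omega⟩, ?_⟩
      simp [edgePts]
    · refine ⟨(horiz_mem_iff _ _).2 ⟨r - y, by omega, by omega, by omega, by omega⟩, ?_⟩
      simp [edgePts, Prod.ext_iff]
      omega

theorem crossing_iff_rows {n r : ℕ} {c : ℕ × ℕ → Bool} {lam : ℕ → ℕ}
    (hP : IsPartition n r lam) :
    IsCrossingPath n r c lam ↔
      ∀ t, 1 ≤ t → t + 1 ≤ r → RowOK (n - r) c (r - t) (lam t) (lam (t + 1)) := by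
  constructor
  · intro hC t ht htr
    set y := r - t with hy
    have hyt : r - y = t := by omega
    have hy1 : 1 ≤ y := by omega
    have hy2 : y + 1 ≤ r := by omega
    have hak : lam t ≤ n - r := part_le_k hP t
    have hba : lam (t + 1) ≤ lam t := hP.2.2 t
    refine ⟨?_, ?_, ?_, ?_⟩
    · -- interior of a run is straight
      intro x hx1 hx2
      have hint : (x, y) ∈ internalV n r := ⟨by omega, by omega, hy1, hy2⟩
      obtain ⟨hT, hF⟩ := hC (x, y) hint
      have he := (edge_at_char (r := r) (lam := lam) x y (by omega) hy1 hy2 ((x, y), false)).2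
        (by right; right; left; rw [hyt]; exact ⟨rfl, by omega, by omega⟩)
      have hf := (edge_at_char (r := r) (lam := lam) x y (by omega) hy1 hy2 ((x - 1, y), false)).2
        (by right; right; right; rw [hyt]; exact ⟨rfl, by omega, by omega⟩)
      cases hc : c (x, y) with
      | true => rfl
      | false =>
        exfalso
        have := hF hc _ he.1 he.2 _ hf.1 hf.2
          (by simp only [ne_eq, Prod.mk.injEq]; intro h; omega)
        exact this rfl
    · -- turn at the bottom end of a vertical step
      intro hb hba'
      have hint : (lam (t+1), y) ∈ internalV n r := ⟨hb, by omega, hy1, hy2⟩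
      obtain ⟨hT, hF⟩ := hC (lam (t+1), y) hint
      have he := (edge_at_char (r := r) (lam := lam) (lam (t+1)) y hb hy1 hy2 ((lam (t+1), y - 1), true)).2
        (by right; left; rw [hyt]; exact ⟨rfl, rfl⟩)
      have hf := (edge_at_char (r := r) (lam := lam) (lam (t+1)) y hb hy1 hy2 ((lam (t+1), y), false)).2
        (by right; right; left; rw [hyt]; exact ⟨rfl, le_rfl, by omega⟩)
      cases hc : c (lam (t+1), y) with
      | false => rfl
      | true =>
        exfalso
        have := hT hc _ he.1 he.2 _ hf.1 hf.2
        simp at this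
    · -- turn at the top end of a vertical step
      intro hba' hak'
      have ha1 : 1 ≤ lam t := by omega
      have hint : (lam t, y) ∈ internalV n r := ⟨ha1, by omega, hy1, hy2⟩
      obtain ⟨hT, hF⟩ := hC (lam t, y) hint
      have he := (edge_at_char (r := r) (lam := lam) (lam t) y ha1 hy1 hy2 ((lam t, y), true)).2
        (by left; rw [hyt]; exact ⟨rfl, rfl⟩)
      have hf := (edge_at_char (r := r) (lam := lam) (lam t) y ha1 hy1 hy2 ((lam t - 1, y), false)).2
        (by right; right; right; rw [hyt]; exact ⟨rfl, by omega, le_rfl⟩)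
      cases hc : c (lam t, y) with
      | false => rfl
      | true =>
        exfalso
        have := hT hc _ he.1 he.2 _ hf.1 hf.2
        simp at this
    · -- straight vertical
      intro hab ha1 hak'
      have hint : (lam t, y) ∈ internalV n r := ⟨ha1, by omega, hy1, hy2⟩
      obtain ⟨hT, hF⟩ := hC (lam t, y) hint
      have he := (edge_at_char (r := r) (lam := lam) (lam t) y ha1 hy1 hy2 ((lam t, y), true)).2
        (by left; rw [hyt]; exact ⟨rfl, rfl⟩)
      have hf := (edge_at_char (r := r) (lam := lam) (lam t) y ha1 hy1 hy2 ((lam t, y - 1), true)).2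
        (by right; left; rw [hyt]; exact ⟨rfl, by omega⟩)
      cases hc : c (lam t, y) with
      | true => rfl
      | false =>
        exfalso
        have := hF hc _ he.1 he.2 _ hf.1 hf.2
          (by simp only [ne_eq, Prod.mk.injEq]; intro h; omega)
        exact this rfl
  · -- backward direction
    intro hR p hp
    obtain ⟨px, py⟩ := p
    obtain ⟨hp1, hp2, hp3, hp4⟩ := hp
    simp only at hp1 hp2 hp3 hp4
    set t := r - py with hty
    have ht1 : 1 ≤ t := by omega
    have ht2 : t + 1 ≤ r := by omega
    have hOK := hR t ht1 ht2
    have hyt : r - t = py := by omega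
    rw [hyt] at hOK
    obtain ⟨hi, hii, hiii, hiv⟩ := hOK
    constructor
    · intro hc e he hpe f hf hpf
      rcases (edge_at_char (r := r) (lam := lam) px py hp1 hp3 (by omega) e).1 ⟨he, hpe⟩ with
        ⟨rfl, hv⟩ | ⟨rfl, hv⟩ | ⟨rfl, hv1, hv2⟩ | ⟨rfl, hv1, hv2⟩ <;>
      rcases (edge_at_char (r := r) (lam := lam) px py hp1 hp3 (by omega) f).1 ⟨hf, hpf⟩ with
        ⟨rfl, hw⟩ | ⟨rfl, hw⟩ | ⟨rfl, hw1, hw2⟩ | ⟨rfl, hw1, hw2⟩ <;>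
        (try rfl) <;> exfalso <;> rw [hty] at * <;>
        [skip; skip; skip; skip; skip; skip; skip; skip]
      -- U & R
      · omega
      -- U & L
      · have := hiii (by omega) (by omega); rw [hv] at this; rw [this] at hc; simp at hc
      -- D & R
      · have := hii (by omega) (by omega); rw [hv] at this; rw [this] at hc; simp at hc
      -- D & L
      · omega
      -- R & U
      · omega
      -- R & D
      · have := hii (by omega) (by omega); rw [hw] at this; rw [this] at hc; simp at hc
      -- L & U
      · have := hiii (by omega) (by omega); rw [hw] at this; rw [this] at hc; simp at hc
      -- L & D
      · omega
    · intro hc e he hpe f hf hpf hne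
      rcases (edge_at_char (r := r) (lam := lam) px py hp1 hp3 (by omega) e).1 ⟨he, hpe⟩ with
        ⟨rfl, hv⟩ | ⟨rfl, hv⟩ | ⟨rfl, hv1, hv2⟩ | ⟨rfl, hv1, hv2⟩ <;>
      rcases (edge_at_char (r := r) (lam := lam) px py hp1 hp3 (by omega) f).1 ⟨hf, hpf⟩ with
        ⟨rfl, hw⟩ | ⟨rfl, hw⟩ | ⟨rfl, hw1, hw2⟩ | ⟨rfl, hw1, hw2⟩ <;>
        (try (simp only [ne_eq]; simp)) <;> exfalso <;> rw [hty] at *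
      -- U & U
      · exact hne rfl
      -- U & D
      · have := hiv (by omega) (by omega) (by omega)
        rw [hv] at this; rw [this] at hc; simp at hc
      -- D & U
      · have := hiv (by omega) (by omega) (by omega)
        rw [hw] at this; rw [this] at hc; simp at hc
      -- D & D
      · exact hne rfl
      -- R & R
      · exact hne rfl
      -- R & L
      · have := hi px (by omega) (by omega)
        rw [this] at hc; simp at hc
      -- L & R
      · have := hi px (by omega) (by omega)
        rw [this] at hc; simp at hc
      -- L & L
      · exact hne rfl

section
variable {n r : ℕ} {c : ℕ × ℕ → Bool}

lemma POK_iff {lam : ℕ → ℕ} :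
    (IsPartition n r lam ∧ IsCrossingPath n r c lam) ↔ POK (n - r) r c lam := by
  constructor
  · rintro ⟨hP, hC⟩
    exact ⟨hP.1, hP.2.1, hP.2.2, (crossing_iff_rows hP).1 hC⟩
  · rintro ⟨h1, h2, h3, h4⟩
    have hP : IsPartition n r lam := ⟨h1, h2, h3⟩
    exact ⟨hP, (crossing_iff_rows hP).2 h4⟩

end

/-- the `n` compatible paths. -/
noncomputable def Phi (n r : ℕ) (c : ℕ × ℕ → Bool) (j : ℕ) : ℕ → ℕ :=
  if j ≤ n - r then lamT (n - r) r c r j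
  else lamT (n - r) r c (j - (n - r)) (ffn (n - r) c (r - (j - (n - r))) 1)

section
variable {n r : ℕ} {c : ℕ × ℕ → Bool}

lemma phi_POK (hr : 1 ≤ r) (hrn : r < n) (j : ℕ) (hj : j < n) : POK (n - r) r c (Phi n r c j) := by
  unfold Phi
  split
  · next h => exact lamT_POK hr le_rfl h
  · next h =>
    have hk : 1 ≤ n - r := by omega
    push_neg at h
    exact lamT_POK (by omega) (by omega) (ffn_le _ _ _ _)

lemma phi_le_val (hr : 1 ≤ r) (hrn : r < n) (j : ℕ) (hj : j ≤ n - r) : Phi n r c j r = j := by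
  unfold Phi
  rw [if_pos hj]
  exact lamT_self hr le_rfl

lemma phi_gt_s (hr : 1 ≤ r) (hrn : r < n) (j : ℕ) (hjk : n - r < j) (hj : j < n) :
    ∀ u, j - (n - r) < u → Phi n r c j u = 0 := by
  intro u hu
  set s := j - (n - r) with hs
  have hs1 : 1 ≤ s := by omega
  have hs2 : s + 1 ≤ r := by omega
  have hk : 1 ≤ n - r := by omega
  unfold Phi
  rw [if_neg (by omega)]
  rcases Nat.lt_or_ge r u with h | h
  · exact lamT_gt u h
  · rw [lamT_dn u (by omega) h]
    have h1 : dnIt (n - r) r c s (ffn (n - r) c (r - s) 1) 1 = 0 := by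
      show prv (n - r) c (r - s - 0) (dnIt (n - r) r c s (ffn (n - r) c (r - s) 1) 0) = 0
      rw [(show dnIt (n - r) r c s (ffn (n - r) c (r - s) 1) 0 = ffn (n - r) c (r - s) 1
        from rfl)]
      simp only [Nat.sub_zero]
      have := prv_ffn_lt (n - r) c (r - s) 1 le_rfl hk
      omega
    exact dnIt_zero_of 1 h1 (u - s) (by omega)

lemma phi_s_val (hr : 1 ≤ r) (hrn : r < n) (j : ℕ) (hjk : n - r < j) (hj : j < n) :
    Phi n r c j (j - (n - r)) = ffn (n - r) c (r - (j - (n - r))) 1 := by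
  unfold Phi
  rw [if_neg (by omega)]
  exact lamT_self (by omega) (by omega)

lemma phi_zero_val (hr : 1 ≤ r) (hrn : r < n) (u : ℕ) (hu : 1 ≤ u) : Phi n r c 0 u = 0 := by
  unfold Phi
  rw [if_pos (by omega)]
  rcases Nat.lt_or_ge r u with h | h
  · exact lamT_gt u h
  · rw [lamT_up u hu h h]
    exact upIt_zero _

lemma phi_complete (hr : 1 ≤ r) (hrn : r < n) {lam : ℕ → ℕ} (h : POK (n - r) r c lam) :
    ∃ j, j < n ∧ lam = Phi n r c j := by
  have hk : 1 ≤ n - r := by omega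
  rcases Nat.eq_zero_or_pos (lam r) with h0 | h0
  · -- lam r = 0
    set s := Nat.findGreatest (fun u => 1 ≤ lam u) r with hsdef
    rcases Nat.eq_zero_or_pos s with hs | hs
    · -- the zero path
      refine ⟨0, by omega, ?_⟩
      have hz : ∀ u, 0 < u → u ≤ r → ¬ 1 ≤ lam u := by
        rw [← Nat.findGreatest_eq_zero_iff]; exact hs
      funext u
      rcases Nat.eq_zero_or_pos u with h1 | h1
      · subst h1
        rw [h.1]
        unfold Phi
        rw [if_pos (by omega), lamT_zero]
      · rw [phi_zero_val (c := c) hr hrn u h1]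
        rcases Nat.lt_or_ge r u with h2 | h2
        · exact h.2.1 u h2
        · have := hz u h1 h2; omega
    · -- leaves the axis at row s
      have hls : 1 ≤ lam s :=
        Nat.findGreatest_of_ne_zero (P := fun u => 1 ≤ lam u) hsdef.symm (by omega)
      have hsr : s ≤ r := Nat.findGreatest_le r
      have hsne : s ≠ r := by intro hh; rw [hh] at hls; omega
      have hs1 : lam (s + 1) = 0 := by
        by_contra hcon
        have h1 : 1 ≤ lam (s + 1) := by omega
        rcases Nat.lt_or_ge r (s + 1) with h2 | h2
        · have := h.2.1 (s+1) h2; omega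
        · exact Nat.findGreatest_is_greatest (P := fun u => 1 ≤ lam u) (by omega) h2 h1
      have hOK := h.2.2.2 s hs (by omega)
      obtain ⟨hb, ha⟩ := rowOK_BD2 (n - r) c (r - s) (lam s) (lam (s+1)) 0 hOK
        (by omega) (by omega) (h.le_k s)
      refine ⟨(n - r) + s, by omega, ?_⟩
      have hjk : n - r < n - r + s := by omega
      have hjn : n - r + s < n := by omega
      have hss : n - r + s - (n - r) = s := by omega
      have hphi := phi_POK (c := c) hr hrn (n - r + s) hjn
      refine POK.unique_of_horiz h hphi s 0 hs (by omega) (by omega) (by omega) ?_ ?_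
      · rw [(by omega : s + 1 = (n - r + s - (n - r)) + 1)]
        have := phi_gt_s (c := c) hr hrn (n - r + s) hjk hjn ((n - r + s - (n - r)) + 1) (by omega)
        omega
      · have := phi_s_val (c := c) hr hrn (n - r + s) hjk hjn
        rw [hss] at this
        rw [this]
        exact ffn_ge _ _ _ _ hk
  · -- lam r ≥ 1
    refine ⟨lam r, by have := h.le_k r; omega, ?_⟩
    have hlk := h.le_k r
    rcases Nat.eq_or_lt_of_le hlk with hek | hlt
    · -- lam r = k: the full path
      funext u
      unfold Phi
      rw [if_pos (by omega)]
      rcases Nat.eq_zero_or_pos u with h1 | h1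
      · subst h1; rw [h.1, lamT_zero]
      rcases Nat.lt_or_ge r u with h2 | h2
      · rw [h.2.1 u h2, lamT_gt u h2]
      · rw [lamT_up u h1 h2 h2, hek, upIt_k]
        have h3 := h.anti u r h2
        have h4 := h.le_k u
        omega
    · -- lam r < k
      have hphi : POK (n - r) r c (Phi n r c (lam r)) := phi_POK (c := c) hr hrn (lam r) (by omega)
      refine POK.unique_of_val h hphi r hr ?_ h0 hlt
      rw [phi_le_val (c := c) hr hrn (lam r) hlk]

lemma phi_inj (hr : 1 ≤ r) (hrn : r < n) : ∀ j1, j1 < n → ∀ j2, j2 < n → Phi n r c j1 = Phi n r c j2 → j1 = j2 := by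
  have hk : 1 ≤ n - r := by omega
  have key : ∀ j1, j1 < n → ∀ j2, j2 < n → j1 ≤ n - r → n - r < j2 →
      Phi n r c j1 ≠ Phi n r c j2 := by
    intro j1 h1 j2 h2 hj1 hj2 heq
    have e1 : Phi n r c j1 r = j1 := phi_le_val (c := c) hr hrn j1 hj1
    have e2 : Phi n r c j2 r = 0 := phi_gt_s (c := c) hr hrn j2 hj2 h2 r (by omega)
    rw [heq] at e1
    have hj10 : j1 = 0 := by omega
    subst hj10
    have e3 := phi_zero_val (c := c) hr hrn (j2 - (n - r)) (by omega)
    have e4 := phi_s_val (c := c) hr hrn j2 hj2 h2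
    have e5 := ffn_ge (n - r) c (r - (j2 - (n - r))) 1 hk
    rw [heq] at e3
    omega
  intro j1 h1 j2 h2 heq
  rcases le_or_gt j1 (n - r) with hj1 | hj1 <;> rcases le_or_gt j2 (n - r) with hj2 | hj2
  · have e1 : Phi n r c j1 r = j1 := phi_le_val (c := c) hr hrn j1 hj1
    have e2 : Phi n r c j2 r = j2 := phi_le_val (c := c) hr hrn j2 hj2
    rw [heq] at e1; omega
  · exact absurd heq (key j1 h1 j2 h2 hj1 hj2)
  · exact absurd heq.symm (key j2 h2 j1 h1 hj2 hj1)
  · -- both large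
    rcases lt_trichotomy j1 j2 with h | h | h
    · exfalso
      have e1 := phi_gt_s (c := c) hr hrn j1 hj1 h1 (j2 - (n - r)) (by omega)
      have e2 := phi_s_val (c := c) hr hrn j2 hj2 h2
      have e5 := ffn_ge (n - r) c (r - (j2 - (n - r))) 1 hk
      rw [heq] at e1; omega
    · exact h
    · exfalso
      have e1 := phi_gt_s (c := c) hr hrn j2 hj2 h2 (j1 - (n - r)) (by omega)
      have e2 := phi_s_val (c := c) hr hrn j1 hj1 h1
      have e5 := ffn_ge (n - r) c (r - (j1 - (n - r))) 1 hk
      rw [← heq] at e1; omega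

lemma card_paths (hr : 1 ≤ r) (hrn : r < n) :
    {lam : ℕ → ℕ | IsPartition n r lam ∧ IsCrossingPath n r c lam}.ncard = n := by
  have hset : {lam : ℕ → ℕ | IsPartition n r lam ∧ IsCrossingPath n r c lam} =
      Phi n r c '' ↑(Finset.range n) := by
    ext lam
    simp only [Set.mem_setOf_eq, Set.mem_image, Finset.coe_range, Set.mem_Iio]
    constructor
    · intro h
      obtain ⟨j, hj, hje⟩ := phi_complete hr hrn (POK_iff.1 h)
      exact ⟨j, hj, hje.symm⟩
    · rintro ⟨j, hj, rfl⟩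
      exact POK_iff.2 (phi_POK (c := c) hr hrn j hj)
  rw [hset]
  rw [Set.ncard_image_of_injOn (fun j1 hj1 j2 hj2 heq => by
    simp only [Finset.coe_range, Set.mem_Iio] at hj1 hj2
    exact phi_inj hr hrn j1 hj1 j2 hj2 heq)]
  rw [Set.ncard_coe_finset, Finset.card_range]

end

section arrows
variable {n r : ℕ} {c : ℕ × ℕ → Bool}

lemma step_sum {len : ℕ} {z : ℕ → ℕ × ℕ}
    (hstep : ∀ i < len, z (i + 1) = ((z i).1 + 1, (z i).2) ∨
      z (i + 1) = ((z i).1, (z i).2 + 1)) :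
    ∀ i ≤ len, (z i).1 + (z i).2 = (z 0).1 + (z 0).2 + i := by
  intro i
  induction i with
  | zero => intro _; omega
  | succ j ih =>
    intro hj
    have hih := ih (by omega)
    rcases hstep j (by omega) with h1 | h1
    · have e1 : (z (j+1)).1 = (z j).1 + 1 := by rw [h1]
      have e2 : (z (j+1)).2 = (z j).2 := by rw [h1]
      omega
    · have e1 : (z (j+1)).1 = (z j).1 := by rw [h1]
      have e2 : (z (j+1)).2 = (z j).2 + 1 := by rw [h1]
      omega

lemma step_mono {len : ℕ} {z : ℕ → ℕ × ℕ}
    (hstep : ∀ i < len, z (i + 1) = ((z i).1 + 1, (z i).2) ∨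
      z (i + 1) = ((z i).1, (z i).2 + 1)) :
    ∀ i j, i ≤ j → j ≤ len → (z i).1 ≤ (z j).1 ∧ (z i).2 ≤ (z j).2 := by
  intro i j hij hjl
  induction j, hij using Nat.le_induction with
  | base => exact ⟨le_rfl, le_rfl⟩
  | succ j hij ih =>
    have hih := ih (by omega)
    rcases hstep j (by omega) with h1 | h1
    · have e1 : (z (j+1)).1 = (z j).1 + 1 := by rw [h1]
      have e2 : (z (j+1)).2 = (z j).2 := by rw [h1]
      omega
    · have e1 : (z (j+1)).1 = (z j).1 := by rw [h1]
      have e2 : (z (j+1)).2 = (z j).2 + 1 := by rw [h1]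
      omega

lemma exu_horiz (hr : 1 ≤ r) (hrn : r < n) (t x : ℕ) (ht1 : 1 ≤ t) (ht2 : t + 1 ≤ r)
    (hx : x + 1 ≤ n - r) :
    ∃! lam : ℕ → ℕ, POK (n - r) r c lam ∧ (lam (t + 1) ≤ x ∧ x + 1 ≤ lam t) := by
  have hPOK : POK (n - r) r c (lamT (n - r) r c t (ffn (n - r) c (r - t) (x + 1))) :=
    lamT_POK ht1 (by omega) (ffn_le _ _ _ _)
  have hself : lamT (n - r) r c t (ffn (n - r) c (r - t) (x + 1)) t =
      ffn (n - r) c (r - t) (x + 1) := lamT_self ht1 (by omega)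
  have hsucc : lamT (n - r) r c t (ffn (n - r) c (r - t) (x + 1)) (t + 1) =
      prv (n - r) c (r - t) (ffn (n - r) c (r - t) (x + 1)) := lamT_succ ht1 ht2
  have hlow : lamT (n - r) r c t (ffn (n - r) c (r - t) (x + 1)) (t + 1) ≤ x := by
    rw [hsucc]
    have := prv_ffn_lt (n - r) c (r - t) (x + 1) (by omega) hx
    omega
  have hhigh : x + 1 ≤ lamT (n - r) r c t (ffn (n - r) c (r - t) (x + 1)) t := by
    rw [hself]; exact ffn_ge _ _ _ _ hx
  refine ⟨lamT (n - r) r c t (ffn (n - r) c (r - t) (x + 1)), ⟨hPOK, hlow, hhigh⟩, ?_⟩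
  rintro lam' ⟨h', hb', ha'⟩
  exact POK.unique_of_horiz h' hPOK t x ht1 ht2 hb' ha' hlow hhigh

lemma exu_vert (hr : 1 ≤ r) (hrn : r < n) (t x : ℕ) (ht1 : 1 ≤ t) (ht2 : t ≤ r)
    (hx1 : 1 ≤ x) (hx2 : x + 1 ≤ n - r) :
    ∃! lam : ℕ → ℕ, POK (n - r) r c lam ∧ lam t = x := by
  have hPOK : POK (n - r) r c (lamT (n - r) r c t x) := lamT_POK ht1 ht2 (by omega)
  have hself : lamT (n - r) r c t x t = x := lamT_self ht1 ht2
  refine ⟨lamT (n - r) r c t x, ⟨hPOK, hself⟩, ?_⟩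
  rintro lam' ⟨h', he'⟩
  exact POK.unique_of_val h' hPOK t ht1 (by rw [he', hself]) (by omega) (by omega)

lemma exu_to_goal {A : Set ((ℕ × ℕ) × Bool)} {Q : (ℕ → ℕ) → Prop}
    (hEU : ∃! lam : ℕ → ℕ, POK (n - r) r c lam ∧ Q lam)
    (hiff : ∀ lam, IsPartition n r lam → (A ⊆ pathEdges r lam ↔ Q lam)) :
    ∃! lam : ℕ → ℕ, IsPartition n r lam ∧ IsCrossingPath n r c lam ∧
      A ⊆ pathEdges r lam := by
  obtain ⟨w, ⟨hw, hQ⟩, huniq⟩ := hEU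
  obtain ⟨hwP, hwC⟩ := POK_iff.mpr hw
  refine ⟨w, ⟨hwP, hwC, (hiff w hwP).2 hQ⟩, ?_⟩
  rintro lam' ⟨hP', hC', hs'⟩
  exact huniq lam' ⟨POK_iff.mp ⟨hP', hC'⟩, (hiff lam' hP').1 hs'⟩

lemma mem_ladderV_iff (p : ℕ × ℕ) :
    p ∈ ladderV n r ↔ (p = (0, 0) ∨ p = (n - r, r) ∨
      (1 ≤ p.1 ∧ p.1 + 1 ≤ n - r ∧ 1 ≤ p.2 ∧ p.2 + 1 ≤ r)) := by
  simp [ladderV, Set.mem_union, Set.mem_insert_iff, Set.mem_singleton_iff, or_assoc]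

lemma internal_mem_ladderV {p : ℕ × ℕ}
    (h : 1 ≤ p.1 ∧ p.1 + 1 ≤ n - r ∧ 1 ≤ p.2 ∧ p.2 + 1 ≤ r) : p ∈ ladderV n r :=
  Set.mem_union_right _ h

end arrows

lemma pair_eq {p : ℕ × ℕ} {u v : ℕ} (h : p = (u, v)) : p.1 = u ∧ p.2 = v := by
  rw [h]; exact ⟨rfl, rfl⟩

open Classical in
noncomputable def zidx (z : ℕ → ℕ × ℕ) (h : ℕ) : ℕ :=
  if hh : ∃ i, h ≤ (z i).2 then Nat.find hh else 0

/-- the partition associated with a full monotone path from `(0,0)` to `(n-r, r)`. -/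
noncomputable def lamA (n r : ℕ) (z : ℕ → ℕ × ℕ) : ℕ → ℕ := fun t =>
  if t = 0 then n - r else if r < t then 0 else (z (zidx z (r - t + 1))).1

section fullarrow
variable {n r : ℕ} {c : ℕ × ℕ → Bool}

lemma arrow_full (hr : 1 ≤ r) (hrn : r < n) (A : Set ((ℕ × ℕ) × Bool))
    {len : ℕ} {z : ℕ → ℕ × ℕ} (hlen : 0 < len)
    (hstep : ∀ i < len, z (i + 1) = ((z i).1 + 1, (z i).2) ∨
      z (i + 1) = ((z i).1, (z i).2 + 1))
    (hbound : ∀ i ≤ len, (z i).1 ≤ n - r ∧ (z i).2 ≤ r)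
    (hz00 : z 0 = (0, 0)) (hzlk : z len = (n - r, r))
    (hmid : ∀ i, 0 < i → i < len → z i ∉ ladderV n r)
    (hAeq : A = {e | ∃ i < len,
      (z (i + 1) = ((z i).1 + 1, (z i).2) ∧ e = (z i, false)) ∨
      (z (i + 1) = ((z i).1, (z i).2 + 1) ∧ e = (z i, true))}) :
    ∃! lam : ℕ → ℕ, IsPartition n r lam ∧ IsCrossingPath n r c lam ∧
      A ⊆ pathEdges r lam := by
  obtain ⟨hz01, hz02⟩ := pair_eq hz00
  obtain ⟨hl1, hl2⟩ := pair_eq hzlk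
  have hmono := step_mono hstep
  have hsum : ∀ i ≤ len, (z i).1 + (z i).2 = i := by
    intro i hi
    have := step_sum hstep i hi
    omega
  have hlen' : len = (n - r) + r := by
    have := hsum len le_rfl; omega
  have hAmem : ∀ e, e ∈ A ↔ ∃ i, i < len ∧
      ((z (i + 1) = ((z i).1 + 1, (z i).2) ∧ e = (z i, false)) ∨
       (z (i + 1) = ((z i).1, (z i).2 + 1) ∧ e = (z i, true))) := by
    intro e; rw [hAeq]; simp only [Set.mem_setOf_eq]
  -- basic facts about `zidx`
  have hidx_le : ∀ h j, h ≤ (z j).2 → zidx z h ≤ j := by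
    intro h j hj
    unfold zidx
    rw [dif_pos ⟨j, hj⟩]
    exact Nat.find_min' _ hj
  have hidx_spec : ∀ h, h ≤ r → h ≤ (z (zidx z h)).2 ∧ zidx z h ≤ len ∧
      (∀ j, j < zidx z h → (z j).2 < h) := by
    intro h hh
    have hex : ∃ i, h ≤ (z i).2 := ⟨len, by omega⟩
    unfold zidx
    rw [dif_pos hex]
    refine ⟨Nat.find_spec hex, ?_, ?_⟩
    · have : zidx z h ≤ len := hidx_le h len (by omega)
      unfold zidx at this
      rw [dif_pos hex] at this
      exact this
    · intro j hj
      have := Nat.find_min hex hj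
      omega
  have hidx_up : ∀ h, 1 ≤ h → h ≤ r → 1 ≤ zidx z h ∧ (z (zidx z h)).2 = h ∧
      z (zidx z h) = ((z (zidx z h - 1)).1, (z (zidx z h - 1)).2 + 1) ∧
      (z (zidx z h - 1)).2 = h - 1 := by
    intro h h1 h2
    obtain ⟨ha, hb, hc⟩ := hidx_spec h h2
    have hpos : 1 ≤ zidx z h := by
      rcases Nat.eq_zero_or_pos (zidx z h) with h0 | h0
      · rw [h0] at ha; omega
      · exact h0
    have hprev : (z (zidx z h - 1)).2 < h := hc _ (by omega)
    have hstep' := hstep (zidx z h - 1) (by omega)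
    rw [(by omega : zidx z h - 1 + 1 = zidx z h)] at hstep'
    rcases hstep' with hs | hs
    · exfalso
      have := (pair_eq hs).2
      omega
    · have e2 := (pair_eq hs).2
      exact ⟨hpos, by omega, hs, by omega⟩
  have hidx_mono : ∀ h h', h ≤ h' → h' ≤ r → zidx z h ≤ zidx z h' := by
    intro h h' hhh h2
    obtain ⟨ha, hb, hc⟩ := hidx_spec h' h2
    exact hidx_le h _ (by omega)
  -- values of lamA
  have hlam0 : lamA n r z 0 = n - r := by unfold lamA; simp
  have hlamgt : ∀ u, r < u → lamA n r z u = 0 := by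
    intro u hu; unfold lamA; rw [if_neg (by omega), if_pos hu]
  have hlamval : ∀ t, 1 ≤ t → t ≤ r → lamA n r z t = (z (zidx z (r - t + 1))).1 := by
    intro t h1 h2; unfold lamA; rw [if_neg (by omega), if_neg (by omega)]
  -- IsPartition
  have hPart : IsPartition n r (lamA n r z) := by
    refine ⟨hlam0, hlamgt, ?_⟩
    intro t
    rcases Nat.lt_or_ge r (t + 1) with h | h
    · rw [hlamgt (t + 1) h]; omega
    · rcases Nat.eq_zero_or_pos t with h0 | h0
      · subst h0
        rw [hlam0, hlamval 1 le_rfl (by omega)]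
        have := hidx_spec (r - 1 + 1) (by omega)
        exact (hbound _ this.2.1).1
      · rw [hlamval t h0 (by omega), hlamval (t + 1) (by omega) h]
        have h1 : r - (t + 1) + 1 ≤ r - t + 1 := by omega
        have hle := hidx_mono (r - (t + 1) + 1) (r - t + 1) h1 (by omega)
        have hsp := hidx_spec (r - t + 1) (by omega)
        exact (hmono _ _ hle hsp.2.1).1
  -- A ⊆ pathEdges r lamA
  have hAsub : A ⊆ pathEdges r (lamA n r z) := by
    intro e he
    rw [hAmem] at he
    obtain ⟨i, hi, hd⟩ := he
    rcases hd with ⟨hs, rfl⟩ | ⟨hs, rfl⟩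
    · -- right step: horizontal edge
      obtain ⟨e1, e2⟩ := pair_eq hs
      have hy : (z i).2 ≤ r := (hbound i (by omega)).2
      refine (horiz_mem_iff (lam := lamA n r z) _ _).2
        ⟨r - (z i).2, by omega, ?_, ?_, by omega⟩
      · -- lower bound
        rcases Nat.eq_zero_or_pos ((z i).2) with hy0 | hy0
        · rw [(by omega : r - (z i).2 + 1 = r + 1), hlamgt (r + 1) (by omega)]
          omega
        · rw [(by omega : r - (z i).2 + 1 = r - ((z i).2 - 1))]
          rw [hlamval (r - ((z i).2 - 1)) (by omega) (by omega)]
          rw [(by omega : r - (r - ((z i).2 - 1)) + 1 = (z i).2)]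
          have hle : zidx z ((z i).2) ≤ i := hidx_le _ i le_rfl
          have hsp := hidx_spec ((z i).2) hy
          exact (hmono _ i hle (by omega)).1
      · -- upper bound
        rcases Nat.eq_or_lt_of_le hy with hyr | hyr
        · rw [(by omega : r - (z i).2 = 0), hlam0]
          have := (hbound (i + 1) (by omega)).1
          omega
        · rw [hlamval (r - (z i).2) (by omega) (by omega)]
          rw [(by omega : r - (r - (z i).2) + 1 = (z i).2 + 1)]
          have hsp := hidx_spec ((z i).2 + 1) (by omega)
          have hsp1 := hsp.1
          have hgt : i + 1 ≤ zidx z ((z i).2 + 1) := by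
            by_contra hcon
            push_neg at hcon
            have := (hmono (zidx z ((z i).2 + 1)) i (by omega) (by omega)).2
            omega
          have := (hmono (i + 1) _ hgt hsp.2.1).1
          omega
    · -- up step: vertical edge
      obtain ⟨e1, e2⟩ := pair_eq hs
      have hy : (z (i + 1)).2 ≤ r := (hbound (i + 1) (by omega)).2
      have hidx_eq : zidx z ((z i).2 + 1) = i + 1 := by
        have hle : zidx z ((z i).2 + 1) ≤ i + 1 := hidx_le _ (i + 1) (by omega)
        have hsp := hidx_spec ((z i).2 + 1) (by omega)
        have hsp1 := hsp.1
        rcases Nat.eq_or_lt_of_le hle with h | h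
        · exact h
        · exfalso
          have := (hmono (zidx z ((z i).2 + 1)) i (by omega) (by omega)).2
          omega
      refine (vert_mem_iff (lam := lamA n r z) _ _).2
        ⟨r - (z i).2, by omega, by omega, ?_, by omega⟩
      rw [hlamval (r - (z i).2) (by omega) (by omega)]
      rw [(by omega : r - (r - (z i).2) + 1 = (z i).2 + 1)]
      rw [hidx_eq]
      omega
  -- pathEdges r lamA ⊆ A
  have hEsub : pathEdges r (lamA n r z) ⊆ A := by
    intro e he
    rcases he with ⟨t, ht1, ht2, rfl⟩ | ⟨t, x, ht, hb1, hb2, rfl⟩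
    · -- vertical edge of lamA
      have hh1 : 1 ≤ r - t + 1 := by omega
      have hh2 : r - t + 1 ≤ r := by omega
      obtain ⟨hpos, hub, hup, hprev⟩ := hidx_up (r - t + 1) hh1 hh2
      have hilen : zidx z (r - t + 1) ≤ len := (hidx_spec _ hh2).2.1
      have hz' : z (zidx z (r - t + 1) - 1) = (lamA n r z t, r - t) := by
        have e1 := (pair_eq hup).1
        rw [hlamval t ht1 ht2]
        exact Prod.ext_iff.2 ⟨by omega, by omega⟩
      rw [hAmem]
      refine ⟨zidx z (r - t + 1) - 1, by omega, Or.inr ⟨?_, ?_⟩⟩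
      · rw [(by omega : zidx z (r - t + 1) - 1 + 1 = zidx z (r - t + 1))]
        exact hup
      · rw [hz']
    · -- horizontal edge of lamA
      have hy : r - t ≤ r := by omega
      -- lower index at the same height
      have hlo : ∃ lo, lo ≤ x + (r - t) ∧ lo ≤ len ∧ (z lo).2 = r - t := by
        rcases Nat.eq_or_lt_of_le ht with htr | htr
        · refine ⟨0, by omega, by omega, by omega⟩
        · have h1 : 1 ≤ r - t := by omega
          obtain ⟨hpos, hval, _, _⟩ := hidx_up (r - t) h1 (by omega)
          have hilen := (hidx_spec (r - t) (by omega)).2.1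
          refine ⟨zidx z (r - t), ?_, hilen, hval⟩
          have hv : lamA n r z (t + 1) = (z (zidx z (r - t))).1 := by
            rw [hlamval (t + 1) (by omega) (by omega),
              (by omega : r - (t + 1) + 1 = r - t)]
          have := hsum (zidx z (r - t)) hilen
          omega
      -- upper index at the same height
      have hhi : ∃ hi', x + (r - t) + 1 ≤ hi' ∧ hi' ≤ len ∧ (z hi').2 = r - t := by
        rcases Nat.eq_zero_or_pos t with ht0 | ht0
        · subst ht0
          refine ⟨len, ?_, le_rfl, by omega⟩
          rw [hlam0] at hb2
          omega
        · have h1 : 1 ≤ r - t + 1 := by omega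
          obtain ⟨hpos, hval, hup, hprev⟩ := hidx_up (r - t + 1) h1 (by omega)
          have hilen := (hidx_spec (r - t + 1) (by omega)).2.1
          refine ⟨zidx z (r - t + 1) - 1, ?_, by omega, hprev⟩
          have hv : lamA n r z t = (z (zidx z (r - t + 1))).1 := hlamval t ht0 ht
          have e1 := (pair_eq hup).1
          have := hsum (zidx z (r - t + 1) - 1) (by omega)
          omega
      obtain ⟨lo, hlo1, hlo2, hlo3⟩ := hlo
      obtain ⟨hi', hhi1, hhi2, hhi3⟩ := hhi
      set i := x + (r - t) with hidef
      have hyi : (z i).2 = r - t := by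
        have h1 := (hmono lo i hlo1 (by omega)).2
        have h2 := (hmono i hi' (by omega) hhi2).2
        omega
      have hyi1 : (z (i + 1)).2 = r - t := by
        have h1 := (hmono lo (i + 1) (by omega) (by omega)).2
        have h2 := (hmono (i + 1) hi' hhi1 hhi2).2
        omega
      have hxi : (z i).1 = x := by
        have := hsum i (by omega)
        omega
      have histep : z (i + 1) = ((z i).1 + 1, (z i).2) := by
        rcases hstep i (by omega) with h | h
        · exact h
        · exfalso
          have := (pair_eq h).2
          omega
      have hz' : z i = (x, r - t) := Prod.ext_iff.2 ⟨hxi, hyi⟩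
      rw [hAmem]
      exact ⟨i, by omega, Or.inl ⟨histep, by rw [hz']⟩⟩
  -- vacuous crossing condition
  have hnotint : ∀ e ∈ pathEdges r (lamA n r z), ∀ p ∈ internalV n r, p ∉ edgePts e := by
    intro e he p hp hpe
    obtain ⟨hp1, hp2, hp3, hp4⟩ := hp
    have heA := hEsub he
    rw [hAmem] at heA
    obtain ⟨i, hi, hd⟩ := heA
    have hpz : p = z i ∨ p = z (i + 1) := by
      rcases hd with ⟨hs, rfl⟩ | ⟨hs, rfl⟩
      · simp only [edgePts, Set.mem_insert_iff, Set.mem_singleton_iff] at hpe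
        rcases hpe with h | h
        · exact Or.inl h
        · right; rw [hs]; simpa using h
      · simp only [edgePts, Set.mem_insert_iff, Set.mem_singleton_iff] at hpe
        rcases hpe with h | h
        · exact Or.inl h
        · right; rw [hs]; simpa using h
    have hcontra : ∀ j, j ≤ len → p = z j → False := by
      intro j hj hpj
      rcases Nat.eq_zero_or_pos j with h0 | h0
      · subst h0
        have : p.1 = 0 := by rw [hpj, hz00]
        omega
      rcases Nat.eq_or_lt_of_le hj with hjl | hjl
      · rw [hjl, hzlk] at hpj
        have : p.2 = r := by rw [hpj]
        omega
      · exact hmid j h0 hjl (by rw [← hpj]; exact internal_mem_ladderV ⟨hp1, hp2, hp3, hp4⟩)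
    rcases hpz with h | h
    · exact hcontra i (by omega) h
    · exact hcontra (i + 1) (by omega) h
  have hCross : IsCrossingPath n r c (lamA n r z) := by
    intro p hp
    constructor
    · intro _ e he hpe
      exact absurd hpe (hnotint e he p hp)
    · intro _ e he hpe
      exact absurd hpe (hnotint e he p hp)
  refine ⟨lamA n r z, ⟨hPart, hCross, hAsub⟩, ?_⟩
  rintro lam' ⟨hP', hC', hs'⟩
  funext u
  rcases Nat.eq_zero_or_pos u with h0 | h0
  · subst h0; rw [hP'.1, hlam0]
  rcases Nat.lt_or_ge r u with h1 | h1
  · rw [hP'.2.1 u h1, hlamgt u h1]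
  · have hv : ((lamA n r z u, r - u), true) ∈ pathEdges r (lamA n r z) :=
      (vert_mem_iff (lam := lamA n r z) _ _).2 ⟨u, h0, h1, rfl, rfl⟩
    have hvA : ((lamA n r z u, r - u), true) ∈ A := hEsub hv
    obtain ⟨u', hu1, hu2, he1, he2⟩ := (vert_mem_iff (lam := lam') _ _).1 (hs' hvA)
    have : u' = u := by omega
    subst this
    exact he1
end fullarrow
section arrowmain
variable {n r : ℕ} {c : ℕ × ℕ → Bool}

theorem arrow_exu (hr : 1 ≤ r) (hrn : r < n) (A : Set ((ℕ × ℕ) × Bool))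
    (hA : IsArrow n r A) :
    ∃! lam : ℕ → ℕ, IsPartition n r lam ∧ IsCrossingPath n r c lam ∧
      A ⊆ pathEdges r lam := by
  obtain ⟨len, z, hlen, hstep, hbound, hz0, hzlen, hmid, hAeq⟩ := hA
  have hsum := step_sum hstep
  have hmono := step_mono hstep
  have hk : 1 ≤ n - r := by omega
  rw [mem_ladderV_iff] at hz0 hzlen
  have hAmem : ∀ e, e ∈ A ↔ ∃ i, i < len ∧
      ((z (i + 1) = ((z i).1 + 1, (z i).2) ∧ e = (z i, false)) ∨
       (z (i + 1) = ((z i).1, (z i).2 + 1) ∧ e = (z i, true))) := by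
    intro e; rw [hAeq]; simp only [Set.mem_setOf_eq]
  rcases hz0 with hz00 | hz0k | hz0i
  · -- z 0 = (0,0)
    obtain ⟨hz01, hz02⟩ := pair_eq hz00
    rcases hzlen with hzl0 | hzlk | hzli
    · -- z len = (0,0) : impossible
      exfalso
      obtain ⟨hl1, hl2⟩ := pair_eq hzl0
      have := hsum len le_rfl
      omega
    · -- FULL ARROW: z 0 = (0,0), z len = (n-r, r)
      exact arrow_full hr hrn A hlen hstep hbound
        (by rw [Prod.ext_iff]; exact pair_eq hz00)
        (by rw [Prod.ext_iff]; exact pair_eq hzlk) hmid hAeq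
    · -- z len internal : entry arrows
      obtain ⟨hq1, hq2, hq3, hq4⟩ := hzli
      have hlen2 : 2 ≤ len := by
        have := hsum len le_rfl; omega
      have hw : z (len - 1) ∉ ladderV n r := hmid (len - 1) (by omega) (by omega)
      have hwle1 : (z (len - 1)).1 ≤ (z len).1 :=
        (hmono (len - 1) len (by omega) le_rfl).1
      have hwle2 : (z (len - 1)).2 ≤ (z len).2 :=
        (hmono (len - 1) len (by omega) le_rfl).2
      have hwsum : (z (len - 1)).1 + (z (len - 1)).2 = len - 1 := by
        have := hsum (len - 1) (by omega); omega
      have hW : (z (len - 1)).1 = 0 ∨ (z (len - 1)).2 = 0 := by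
        by_contra hcon
        push_neg at hcon
        exact hw (internal_mem_ladderV ⟨by omega, by omega, by omega, by omega⟩)
      have hl : len - 1 + 1 = len := by omega
      rcases hW with hW | hW
      · -- entering from the left boundary
        have hzi : ∀ i, i ≤ len - 1 → (z i).1 = 0 ∧ (z i).2 = i := by
          intro i hi
          have h1 : (z i).1 ≤ (z (len - 1)).1 := (hmono i (len - 1) hi (by omega)).1
          have h2 := hsum i (by omega)
          omega
        have hst : z len = ((z (len - 1)).1 + 1, (z (len - 1)).2) := by
          rcases hstep (len - 1) (by omega) with h | h
          · rw [hl] at h; exact h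
          · exfalso
            rw [hl] at h
            have := (pair_eq h).1
            omega
        obtain ⟨hst1, hst2⟩ := pair_eq hst
        have hb1 : 1 ≤ (z len).2 := hq3
        have hb2 : (z len).2 + 1 ≤ r := hq4
        have hbv : (z len).2 = len - 1 := by
          have := (hzi (len - 1) le_rfl).2; omega
        -- A ⊆ E(lam) ↔ left entry condition
        have hiff : ∀ lam, IsPartition n r lam →
            (A ⊆ pathEdges r lam ↔
              (lam (r - (z len).2 + 1) ≤ 0 ∧ 0 + 1 ≤ lam (r - (z len).2))) := by
          intro lam hP
          constructor
          · intro hsub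
            have hmem : ((z (len - 1), false) : (ℕ × ℕ) × Bool) ∈ A := by
              rw [hAmem]
              exact ⟨len - 1, by omega, Or.inl ⟨by rw [hl]; exact hst, rfl⟩⟩
            have := (horiz_mem_iff (lam := lam) (z (len - 1)).1 (z (len - 1)).2).1
              (hsub hmem)
            obtain ⟨u, hu, h1, h2, h3⟩ := this
            have hu' : u = r - (z len).2 := by omega
            subst hu'
            have hz1 : (z (len - 1)).1 = 0 := hW
            constructor
            · omega
            · omega
          · rintro ⟨hc1, hc2⟩ e he
            rw [hAmem] at he
            obtain ⟨i, hi, hd⟩ := he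
            rcases Nat.eq_or_lt_of_le (by omega : i + 1 ≤ len) with hil | hil
            · -- i = len - 1 : the horizontal entry edge
              have hieq : i = len - 1 := by omega
              subst hieq
              rcases hd with ⟨h1, rfl⟩ | ⟨h1, rfl⟩
              · exact (horiz_mem_iff (lam := lam) _ _).2
                  ⟨r - (z len).2, by omega, by omega, by omega, by omega⟩
              · exfalso
                rw [hl] at h1
                have := (pair_eq h1).1
                omega
            · -- i < len - 1 : vertical edges on the left wall
              have hzi1 := hzi i (by omega)
              have hzi2 := hzi (i + 1) (by omega)
              rcases hd with ⟨h1, rfl⟩ | ⟨h1, rfl⟩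
              · exfalso
                have := (pair_eq h1).1
                omega
              · refine (vert_mem_iff (lam := lam) _ _).2
                  ⟨r - i, by omega, by omega, ?_, by omega⟩
                have hanti := part_anti hP (r - (z len).2 + 1) (r - i) (by omega)
                omega
        exact exu_to_goal
          (exu_horiz hr hrn (r - (z len).2) 0 (by omega) (by omega) (by omega)) hiff
      · -- entering from the bottom boundary
        have hzi : ∀ i, i ≤ len - 1 → (z i).2 = 0 ∧ (z i).1 = i := by
          intro i hi
          have h1 : (z i).2 ≤ (z (len - 1)).2 := (hmono i (len - 1) hi (by omega)).2
          have h2 := hsum i (by omega)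
          omega
        have hst : z len = ((z (len - 1)).1, (z (len - 1)).2 + 1) := by
          rcases hstep (len - 1) (by omega) with h | h
          · exfalso
            rw [hl] at h
            have := (pair_eq h).2
            omega
          · rw [hl] at h; exact h
        obtain ⟨hst1, hst2⟩ := pair_eq hst
        have hav : (z len).1 = len - 1 := by
          have := (hzi (len - 1) le_rfl).1; omega
        have hiff : ∀ lam, IsPartition n r lam →
            (A ⊆ pathEdges r lam ↔ lam r = (z len).1) := by
          intro lam hP
          constructor
          · intro hsub
            have hmem : ((z (len - 1), true) : (ℕ × ℕ) × Bool) ∈ A := by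
              rw [hAmem]
              exact ⟨len - 1, by omega, Or.inr ⟨by rw [hl]; exact hst, rfl⟩⟩
            have := (vert_mem_iff (lam := lam) (z (len - 1)).1 (z (len - 1)).2).1
              (hsub hmem)
            obtain ⟨u, hu1, hu2, h1, h2⟩ := this
            have hu' : u = r := by omega
            subst hu'
            omega
          · intro hc e he
            rw [hAmem] at he
            obtain ⟨i, hi, hd⟩ := he
            rcases Nat.eq_or_lt_of_le (by omega : i + 1 ≤ len) with hil | hil
            · have hieq : i = len - 1 := by omega
              subst hieq
              rcases hd with ⟨h1, rfl⟩ | ⟨h1, rfl⟩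
              · exfalso
                rw [hl] at h1
                have := (pair_eq h1).2
                omega
              · exact (vert_mem_iff (lam := lam) _ _).2 ⟨r, hr, le_rfl, by omega, by omega⟩
            · have hzi1 := hzi i (by omega)
              have hzi2 := hzi (i + 1) (by omega)
              rcases hd with ⟨h1, rfl⟩ | ⟨h1, rfl⟩
              · refine (horiz_mem_iff (lam := lam) _ _).2
                  ⟨r, le_rfl, ?_, ?_, by omega⟩
                · rw [hP.2.1 (r + 1) (by omega)]; omega
                · omega
              · exfalso
                have := (pair_eq h1).2
                omega
        exact exu_to_goal
          (exu_vert hr hrn r ((z len).1) hr le_rfl (by omega) (by omega)) hiff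
  · -- z 0 = (n - r, r) : impossible
    exfalso
    obtain ⟨h01, h02⟩ := pair_eq hz0k
    rcases hstep 0 hlen with h | h <;> rw [Nat.zero_add] at h
    · have := (pair_eq h).1
      have := (hbound 1 (by omega)).1
      omega
    · have := (pair_eq h).2
      have := (hbound 1 (by omega)).2
      omega
  · -- z 0 internal
    obtain ⟨hp1, hp2, hp3, hp4⟩ := hz0i
    rcases hzlen with hzl0 | hzlk | hzli
    · -- z len = (0,0) : impossible
      exfalso
      obtain ⟨hl1, hl2⟩ := pair_eq hzl0
      have := hsum len le_rfl
      omega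
    · -- exit arrows: z 0 internal, z len = (n - r, r)
      obtain ⟨hl1, hl2⟩ := pair_eq hzlk
      have hlen2 : 2 ≤ len := by
        have := hsum len le_rfl; omega
      have hw : z 1 ∉ ladderV n r := hmid 1 (by omega) (by omega)
      rcases hstep 0 hlen with hst | hst <;> rw [Nat.zero_add] at hst
      · -- first step right: exit through the right wall
        obtain ⟨hs1, hs2⟩ := pair_eq hst
        have hz1k : (z 1).1 = n - r := by
          by_contra hcon
          exact hw (internal_mem_ladderV ⟨by omega, by
            have := (hbound 1 (by omega)).1; omega, by omega, by omega⟩)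
        have hzi : ∀ i, 1 ≤ i → i ≤ len →
            (z i).1 = n - r ∧ (z i).2 = (z 0).2 + i - 1 := by
          intro i h1 h2
          have ha : (z 1).1 ≤ (z i).1 := (hmono 1 i h1 h2).1
          have hb := (hbound i h2).1
          have hc := hsum i h2
          omega
        have hlenv : len = r - (z 0).2 + 1 := by
          have := (hzi len (by omega) le_rfl).2
          omega
        have hiff : ∀ lam, IsPartition n r lam →
            (A ⊆ pathEdges r lam ↔
              (lam (r - (z 0).2 + 1) ≤ n - r - 1 ∧ (n - r - 1) + 1 ≤ lam (r - (z 0).2))) := by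
          intro lam hP
          constructor
          · intro hsub
            have hmem : ((z 0, false) : (ℕ × ℕ) × Bool) ∈ A := by
              rw [hAmem]; exact ⟨0, by omega, Or.inl ⟨hst, rfl⟩⟩
            obtain ⟨u, hu, h1, h2, h3⟩ :=
              (horiz_mem_iff (lam := lam) (z 0).1 (z 0).2).1 (hsub hmem)
            have hu' : u = r - (z 0).2 := by omega
            subst hu'
            constructor
            · omega
            · omega
          · rintro ⟨hc1, hc2⟩ e he
            rw [hAmem] at he
            obtain ⟨i, hi, hd⟩ := he
            rcases Nat.eq_zero_or_pos i with hi0 | hi0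
            · subst hi0
              rcases hd with ⟨h1, rfl⟩ | ⟨h1, rfl⟩
              · exact (horiz_mem_iff (lam := lam) _ _).2
                  ⟨r - (z 0).2, by omega, by omega, by omega, by omega⟩
              · exfalso
                have := (pair_eq (h1.symm.trans hst)).2
                omega
            · have hzi1 := hzi i hi0 (by omega)
              have hzi2 := hzi (i + 1) (by omega) (by omega)
              rcases hd with ⟨h1, rfl⟩ | ⟨h1, rfl⟩
              · exfalso
                have := (pair_eq h1).1
                omega
              · refine (vert_mem_iff (lam := lam) _ _).2
                  ⟨r - ((z 0).2 + i - 1), by omega, by omega, ?_, by omega⟩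
                have hanti := part_anti hP (r - ((z 0).2 + i - 1)) (r - (z 0).2) (by omega)
                have hltk := part_le_k hP (r - ((z 0).2 + i - 1))
                omega
        exact exu_to_goal
          (exu_horiz hr hrn (r - (z 0).2) (n - r - 1) (by omega) (by omega) (by omega)) hiff
      · -- first step up: exit through the top wall
        obtain ⟨hs1, hs2⟩ := pair_eq hst
        have hz1r : (z 1).2 = r := by
          by_contra hcon
          exact hw (internal_mem_ladderV ⟨by omega, by omega, by omega, by
            have := (hbound 1 (by omega)).2; omega⟩)
        have hzi : ∀ i, 1 ≤ i → i ≤ len →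
            (z i).2 = r ∧ (z i).1 = (z 0).1 + i - 1 := by
          intro i h1 h2
          have ha : (z 1).2 ≤ (z i).2 := (hmono 1 i h1 h2).2
          have hb := (hbound i h2).2
          have hc := hsum i h2
          omega
        have hlenv : len = n - r - (z 0).1 + 1 := by
          have := (hzi len (by omega) le_rfl).2
          omega
        have hiff : ∀ lam, IsPartition n r lam →
            (A ⊆ pathEdges r lam ↔ lam 1 = (z 0).1) := by
          intro lam hP
          constructor
          · intro hsub
            have hmem : ((z 0, true) : (ℕ × ℕ) × Bool) ∈ A := by
              rw [hAmem]; exact ⟨0, by omega, Or.inr ⟨hst, rfl⟩⟩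
            obtain ⟨u, hu1, hu2, h1, h2⟩ :=
              (vert_mem_iff (lam := lam) (z 0).1 (z 0).2).1 (hsub hmem)
            have hu' : u = 1 := by omega
            subst hu'
            omega
          · intro hc e he
            rw [hAmem] at he
            obtain ⟨i, hi, hd⟩ := he
            rcases Nat.eq_zero_or_pos i with hi0 | hi0
            · subst hi0
              rcases hd with ⟨h1, rfl⟩ | ⟨h1, rfl⟩
              · exfalso
                have := (pair_eq (h1.symm.trans hst)).1
                omega
              · exact (vert_mem_iff (lam := lam) _ _).2
                  ⟨1, le_rfl, hr, by omega, by omega⟩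
            · have hzi1 := hzi i hi0 (by omega)
              have hzi2 := hzi (i + 1) (by omega) (by omega)
              rcases hd with ⟨h1, rfl⟩ | ⟨h1, rfl⟩
              · refine (horiz_mem_iff (lam := lam) _ _).2
                  ⟨0, by omega, ?_, ?_, by omega⟩
                · have hanti := part_anti hP 1 (0 + 1) (by omega)
                  omega
                · rw [hP.1]; omega
              · exfalso
                have := (pair_eq h1).2
                have := (hbound (i + 1) (by omega)).2
                omega
        exact exu_to_goal
          (exu_vert hr hrn 1 ((z 0).1) le_rfl hr (by omega) (by omega)) hiff
    · -- single edge: z 0 internal, z len internal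
      obtain ⟨hq1, hq2, hq3, hq4⟩ := hzli
      have hlen1 : len = 1 := by
        by_contra hcon
        have h2 : 2 ≤ len := by omega
        have hw : z 1 ∉ ladderV n r := hmid 1 (by omega) (by omega)
        have ha := (hmono 0 1 (by omega) (by omega)).1
        have hb := (hmono 0 1 (by omega) (by omega)).2
        have hc := (hmono 1 len (by omega) le_rfl).1
        have hd := (hmono 1 len (by omega) le_rfl).2
        exact hw (internal_mem_ladderV ⟨by omega, by omega, by omega, by omega⟩)
      subst hlen1
      rcases hstep 0 (by omega) with hst | hst <;> rw [Nat.zero_add] at hst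
      · -- single horizontal edge
        obtain ⟨hs1, hs2⟩ := pair_eq hst
        have hiff : ∀ lam, IsPartition n r lam →
            (A ⊆ pathEdges r lam ↔
              (lam (r - (z 0).2 + 1) ≤ (z 0).1 ∧ (z 0).1 + 1 ≤ lam (r - (z 0).2))) := by
          intro lam hP
          constructor
          · intro hsub
            have hmem : ((z 0, false) : (ℕ × ℕ) × Bool) ∈ A := by
              rw [hAmem]; exact ⟨0, by omega, Or.inl ⟨hst, rfl⟩⟩
            obtain ⟨u, hu, h1, h2, h3⟩ :=
              (horiz_mem_iff (lam := lam) (z 0).1 (z 0).2).1 (hsub hmem)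
            have hu' : u = r - (z 0).2 := by omega
            subst hu'
            exact ⟨h1, h2⟩
          · rintro ⟨hc1, hc2⟩ e he
            rw [hAmem] at he
            obtain ⟨i, hi, hd⟩ := he
            have hi0 : i = 0 := by omega
            subst hi0
            rcases hd with ⟨h1, rfl⟩ | ⟨h1, rfl⟩
            · exact (horiz_mem_iff (lam := lam) _ _).2
                ⟨r - (z 0).2, by omega, hc1, hc2, by omega⟩
            · exfalso
              have := (pair_eq (h1.symm.trans hst)).2
              omega
        exact exu_to_goal
          (exu_horiz hr hrn (r - (z 0).2) ((z 0).1) (by omega) (by omega) (by omega)) hiff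
      · -- single vertical edge
        obtain ⟨hs1, hs2⟩ := pair_eq hst
        have hiff : ∀ lam, IsPartition n r lam →
            (A ⊆ pathEdges r lam ↔ lam (r - (z 0).2) = (z 0).1) := by
          intro lam hP
          constructor
          · intro hsub
            have hmem : ((z 0, true) : (ℕ × ℕ) × Bool) ∈ A := by
              rw [hAmem]; exact ⟨0, by omega, Or.inr ⟨hst, rfl⟩⟩
            obtain ⟨u, hu1, hu2, h1, h2⟩ :=
              (vert_mem_iff (lam := lam) (z 0).1 (z 0).2).1 (hsub hmem)
            have hu' : u = r - (z 0).2 := by omega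
            subst hu'
            exact h1
          · intro hc e he
            rw [hAmem] at he
            obtain ⟨i, hi, hd⟩ := he
            have hi0 : i = 0 := by omega
            subst hi0
            rcases hd with ⟨h1, rfl⟩ | ⟨h1, rfl⟩
            · exfalso
              have := (pair_eq (h1.symm.trans hst)).1
              omega
            · exact (vert_mem_iff (lam := lam) _ _).2
                ⟨r - (z 0).2, by omega, by omega, hc, by omega⟩
        exact exu_to_goal
          (exu_vert hr hrn (r - (z 0).2) ((z 0).1) (by omega) (by omega) (by omega)
            (by omega)) hiff

end arrowmain

end CDOC

/-- For every crossing diagram `c`, the set of paths of `c` has exactly `n`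
elements, and every arrow of the ladder quiver is contained in the path of exactly one
path of `c`: the paths of a crossing diagram form a 1-covering of the ladder quiver. -/
theorem crossing_diagram_one_covering (n r : ℕ) (hr : 1 ≤ r) (hrn : r < n)
    (c : ℕ × ℕ → Bool) :
    {lam : ℕ → ℕ | IsPartition n r lam ∧ IsCrossingPath n r c lam}.ncard = n ∧
    ∀ A, IsArrow n r A →
      ∃! lam : ℕ → ℕ, IsPartition n r lam ∧ IsCrossingPath n r c lam ∧
        A ⊆ pathEdges r lam := by
  constructor
  · exact CDOC.card_paths (c := c) hr hrn
  · intro A hA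
    exact CDOC.arrow_exu (c := c) hr hrn A hA
end

section
/- The set {χ_λ : λ ∈ 𝒜(n,r)} generates ℤ^B as an abelian group. -/
/-- `χ_λ ∈ ℤ^B`: box `(t,j)` corresponds to the index `(t-1, j-1) : Fin r × Fin (n-r)`. -/
def chi (n r : ℕ) (lam : ℕ → ℕ) : Fin r × Fin (n - r) → ℤ := fun p =>
  if lam (p.1.1 + 1) = p.2.1 + 1 ∧ (p.2.1 + 1 < n - r ∨ lam (p.1.1 + 2) < n - r) then 1 else 0

/-- `λ` is an arrow partition: a rectangle `(a^r)`, a two-step partition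
`((a+1)^c, a^{r-c})`, or a hook-like partition `(k^a, b, 0^{r-a-1})`. -/
def IsArrowPartition (n r : ℕ) (lam : ℕ → ℕ) : Prop :=
  IsPartition n r lam ∧
  ((∃ a, a ≤ n - r ∧ ∀ t, 1 ≤ t → t ≤ r → lam t = a) ∨
   (∃ a c, 1 ≤ a ∧ a + 1 ≤ n - r ∧ 1 ≤ c ∧ c + 1 ≤ r ∧
      (∀ t, 1 ≤ t → t ≤ c → lam t = a + 1) ∧ (∀ t, c + 1 ≤ t → t ≤ r → lam t = a)) ∨
   (∃ a b, a + 2 ≤ r ∧ 1 ≤ b ∧ b ≤ n - r ∧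
      (∀ t, 1 ≤ t → t ≤ a → lam t = n - r) ∧ lam (a + 1) = b ∧
      (∀ t, a + 2 ≤ t → t ≤ r → lam t = 0)))

/-- The rectangle partition `(a^r)`. -/
def rectLam (n r a : ℕ) : ℕ → ℕ := fun t => if t = 0 then n - r else if t ≤ r then a else 0

/-- The hook-like partition `(k^a, b, 0^{r-a-1})`. -/
def hookLam (n r a b : ℕ) : ℕ → ℕ :=
  fun t => if t ≤ a then n - r else if t = a + 1 then b else 0

lemma rect_arrow (n r : ℕ) (a : ℕ) (hak : a ≤ n - r) :
    IsArrowPartition n r (rectLam n r a) := by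
  refine ⟨⟨by simp [rectLam], fun t ht => ?_, fun t => ?_⟩,
    Or.inl ⟨a, hak, fun t ht1 htr => ?_⟩⟩
  · simp only [rectLam]
    rw [if_neg (by omega), if_neg (by omega)]
  · simp only [rectLam]
    split_ifs <;> first | omega | (exfalso; assumption) | (simp_all; omega) | simp_all
  · simp only [rectLam]
    rw [if_neg (by omega), if_pos htr]

lemma hook_arrow (n r a b : ℕ) (har : a + 2 ≤ r) (hb1 : 1 ≤ b) (hbk : b ≤ n - r) :
    IsArrowPartition n r (hookLam n r a b) := by
  refine ⟨⟨by simp [hookLam], fun t ht => ?_, fun t => ?_⟩,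
    Or.inr (Or.inr ⟨a, b, har, hb1, hbk, fun t ht1 hta => ?_, ?_, fun t ht1 ht2 => ?_⟩)⟩
  · simp only [hookLam]
    rw [if_neg (by omega), if_neg (by omega)]
  · simp only [hookLam]
    split_ifs <;> first | omega | (exfalso; assumption) | (simp_all; omega) | simp_all
  · simp only [hookLam]
    rw [if_pos hta]
  · simp only [hookLam]
    rw [if_neg (by omega)]
    simp
  · simp only [hookLam]
    rw [if_neg (by omega), if_neg (by omega)]

lemma E1 (n r : ℕ) (p0 : Fin r × Fin (n - r)) (h1 : p0.1.1 + 1 = r) (h2 : p0.2.1 + 1 = n - r) :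
    chi n r (rectLam n r (n - r)) = Pi.single p0 1 := by
  funext p
  have hp1 := p.1.2
  have hp2 := p.2.2
  simp only [chi, rectLam, Pi.single_apply, Prod.ext_iff, Fin.ext_iff]
  split_ifs <;> first | omega | (exfalso; assumption) | (simp_all; omega) | simp_all

lemma E2 (n r a : ℕ) (ha : a + 2 ≤ r) (p0 : Fin r × Fin (n - r))
    (h1 : p0.1.1 = a) (h2 : p0.2.1 + 1 = n - r) :
    chi n r (hookLam n r a (n - r)) = Pi.single p0 1 := by
  funext p
  have hp1 := p.1.2
  have hp2 := p.2.2
  simp only [chi, hookLam, Pi.single_apply, Prod.ext_iff, Fin.ext_iff]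
  split_ifs <;> first | omega | (exfalso; assumption) | (simp_all; omega) | simp_all

lemma E3a (n r b : ℕ) (hb1 : 1 ≤ b) (hb : b + 1 ≤ n - r) (p0 : Fin r × Fin (n - r))
    (h1 : p0.1.1 = 0) (h2 : p0.2.1 + 1 = b) :
    chi n r (hookLam n r 0 b) = Pi.single p0 1 := by
  funext p
  have hp1 := p.1.2
  have hp2 := p.2.2
  simp only [chi, hookLam, Pi.single_apply, Prod.ext_iff, Fin.ext_iff]
  split_ifs <;> first | omega | (exfalso; assumption) | (simp_all; omega) | simp_all

lemma E3b (n r a b : ℕ) (ha1 : 1 ≤ a) (ha : a + 2 ≤ r) (hb1 : 1 ≤ b) (hb : b + 1 ≤ n - r)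
    (p0 q0 : Fin r × Fin (n - r)) (hp01 : p0.1.1 = a) (hp02 : p0.2.1 + 1 = b)
    (hq01 : q0.1.1 + 1 = a) (hq02 : q0.2.1 + 1 = n - r) :
    chi n r (hookLam n r a b) = Pi.single p0 1 + Pi.single q0 1 := by
  funext p
  have hp1 := p.1.2
  have hp2 := p.2.2
  simp only [chi, hookLam, Pi.add_apply, Pi.single_apply, Prod.ext_iff, Fin.ext_iff]
  split_ifs <;> first | omega | (exfalso; assumption) | (simp_all; omega) | simp_all

lemma colSum (n r : ℕ) (j0 : Fin (n - r)) (hj : j0.1 + 1 < n - r) :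
    chi n r (rectLam n r (j0.1 + 1)) = ∑ t0 : Fin r, Pi.single (t0, j0) 1 := by
  funext p
  rw [Finset.sum_apply]
  rw [Finset.sum_eq_single p.1]
  · have hp1 := p.1.2
    have hp2 := p.2.2
    simp only [chi, rectLam, Pi.single_apply, Prod.ext_iff, Fin.ext_iff]
    split_ifs <;> first | omega | (exfalso; assumption) | (simp_all; omega) | simp_all
  · intro t0 _ hne
    have h : ¬(p = (t0, j0)) := by
      rintro rfl
      exact hne rfl
    simp [Pi.single_apply, h]
  · intro h
    exact absurd (Finset.mem_univ _) h

/-- the set `{χ_λ : λ ∈ 𝒜(n,r)}` generates `ℤ^B` as an abelian group. -/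
theorem chi_arrow_partitions_span (n r : ℕ) (hr : 1 ≤ r) (hrn : r < n) :
    AddSubgroup.closure {v : Fin r × Fin (n - r) → ℤ |
      ∃ lam, IsArrowPartition n r lam ∧ v = chi n r lam} = ⊤ := by
  have hk : 1 ≤ n - r := by omega
  set S : Set (Fin r × Fin (n - r) → ℤ) :=
    {v | ∃ lam, IsArrowPartition n r lam ∧ v = chi n r lam} with hS
  set C := AddSubgroup.closure S with hC
  have hrectS : ∀ a : ℕ, a ≤ n - r → chi n r (rectLam n r a) ∈ C := fun a h2 =>
    AddSubgroup.subset_closure ⟨rectLam n r a, rect_arrow n r a h2, rfl⟩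
  have hhookS : ∀ a b : ℕ, a + 2 ≤ r → 1 ≤ b → b ≤ n - r → chi n r (hookLam n r a b) ∈ C :=
    fun a b h1 h2 h3 =>
      AddSubgroup.subset_closure ⟨hookLam n r a b, hook_arrow n r a b h1 h2 h3, rfl⟩
  -- column k
  have colk : ∀ (t0 : Fin r) (j0 : Fin (n - r)), j0.1 + 1 = n - r →
      Pi.single (t0, j0) (1 : ℤ) ∈ C := by
    intro t0 j0 hj
    by_cases h : t0.1 + 1 = r
    · have := hrectS (n - r) le_rfl
      rwa [E1 n r (t0, j0) h hj] at this
    · have := hhookS t0.1 (n - r) (by have := t0.2; omega) hk le_rfl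
      rwa [E2 n r t0.1 (by have := t0.2; omega) (t0, j0) rfl hj] at this
  -- rows above the bottom
  have rows : ∀ (t0 : Fin r) (j0 : Fin (n - r)), t0.1 + 2 ≤ r →
      Pi.single (t0, j0) (1 : ℤ) ∈ C := by
    intro t0 j0 ht
    by_cases hj : j0.1 + 1 = n - r
    · exact colk t0 j0 hj
    · have hjlt : j0.1 + 1 < n - r := by have := j0.2; omega
      by_cases h0 : t0.1 = 0
      · have := hhookS 0 (j0.1 + 1) (by omega) (by omega) (by omega)
        rwa [E3a n r (j0.1 + 1) (by omega) hjlt (t0, j0) h0 rfl] at this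
      · have ht1 : 1 ≤ t0.1 := by omega
        have hq : t0.1 - 1 < r := by omega
        have hk1 : n - r - 1 < n - r := by omega
        have := hhookS t0.1 (j0.1 + 1) ht (by omega) (by omega)
        rw [E3b n r t0.1 (j0.1 + 1) ht1 ht (by omega) hjlt (t0, j0)
          (⟨t0.1 - 1, hq⟩, ⟨n - r - 1, hk1⟩) rfl rfl (by simp; omega) (by simp; omega)] at this
        have hcol := colk ⟨t0.1 - 1, hq⟩ ⟨n - r - 1, hk1⟩ (by simp; omega)
        have heq : (Pi.single (t0, j0) 1 : Fin r × Fin (n - r) → ℤ) =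
            (Pi.single (t0, j0) (1 : ℤ) + Pi.single ((⟨t0.1 - 1, hq⟩ : Fin r),
              (⟨n - r - 1, hk1⟩ : Fin (n - r))) (1 : ℤ)) -
            Pi.single ((⟨t0.1 - 1, hq⟩ : Fin r), (⟨n - r - 1, hk1⟩ : Fin (n - r))) (1 : ℤ) := by
          abel
        rw [heq]
        exact sub_mem this hcol
  -- all boxes
  have allp : ∀ p : Fin r × Fin (n - r), Pi.single p (1 : ℤ) ∈ C := by
    intro ⟨t0, j0⟩
    by_cases ht : t0.1 + 2 ≤ r
    · exact rows t0 j0 ht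
    · have htr : t0.1 + 1 = r := by have := t0.2; omega
      by_cases hj : j0.1 + 1 = n - r
      · exact colk t0 j0 hj
      · have hjlt : j0.1 + 1 < n - r := by have := j0.2; omega
        have hs := hrectS (j0.1 + 1) (by omega)
        rw [colSum n r j0 hjlt] at hs
        have hadd := Finset.add_sum_erase Finset.univ
          ((fun t0' => Pi.single (t0', j0) 1 : Fin r → Fin r × Fin (n - r) → ℤ)) (Finset.mem_univ t0)
        have h2 : (Pi.single (t0, j0) 1 : Fin r × Fin (n - r) → ℤ) =
            (∑ t0' : Fin r, (Pi.single (t0', j0) 1 : Fin r × Fin (n - r) → ℤ)) -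
              ∑ t0' ∈ Finset.univ.erase t0,
                (Pi.single (t0', j0) 1 : Fin r × Fin (n - r) → ℤ) :=
          eq_sub_of_add_eq hadd
        rw [h2]
        refine sub_mem hs (sum_mem fun t0' ht0' => ?_)
        have hne : t0' ≠ t0 := Finset.ne_of_mem_erase ht0'
        have : t0'.1 + 2 ≤ r := by
          have h1 := t0'.2
          have h2 : t0'.1 ≠ t0.1 := fun h => hne (Fin.ext h)
          omega
        exact rows t0' j0 this
  rw [AddSubgroup.eq_top_iff']
  intro f
  rw [← Finset.univ_sum_single f]
  refine sum_mem fun p _ => ?_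
  have : Pi.single p (f p) = f p • (Pi.single p 1 : Fin r × Fin (n - r) → ℤ) := by
    rw [← Pi.single_smul, smul_eq_mul, mul_one]
  rw [this]
  exact zsmul_mem (allp p) _
end

section
/- The set 𝒜(n,r) of arrow partitions has exactly 2(r−1)(n−r−1) + n elements. -/
/-- Explicit parametrization of arrow partitions by a tag and two parameters. -/
def Farr (k r : ℕ) (p : ℕ × ℕ × ℕ) (t : ℕ) : ℕ :=
  if t = 0 then k
  else if p.1 = 0 then (if t ≤ r then p.2.1 else 0)
  else if p.1 = 1 then (if t ≤ p.2.2 then p.2.1 + 1 else if t ≤ r then p.2.1 else 0)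
  else (if t ≤ p.2.1 then k else if t = p.2.1 + 1 then p.2.2 else 0)

lemma Farr_zero (k r : ℕ) (p : ℕ × ℕ × ℕ) : Farr k r p 0 = k := by simp [Farr]

lemma Farr0_mid (k r a c t : ℕ) (h1 : t ≠ 0) (h2 : t ≤ r) : Farr k r (0, a, c) t = a := by
  simp only [Farr]; norm_num; split_ifs <;> omega

lemma Farr0_hi (k r a c t : ℕ) (h2 : r < t) : Farr k r (0, a, c) t = 0 := by
  simp only [Farr]; norm_num; split_ifs <;> omega

lemma Farr1_lo (k r a c t : ℕ) (h1 : 1 ≤ t) (h2 : t ≤ c) : Farr k r (1, a, c) t = a + 1 := by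
  simp only [Farr]; norm_num; split_ifs <;> omega

lemma Farr1_mid (k r a c t : ℕ) (h1 : c < t) (h2 : t ≤ r) : Farr k r (1, a, c) t = a := by
  simp only [Farr]; norm_num; split_ifs <;> omega

lemma Farr1_hi (k r a c t : ℕ) (h1 : c < t) (h2 : r < t) : Farr k r (1, a, c) t = 0 := by
  simp only [Farr]; norm_num; split_ifs <;> omega

lemma Farr2_lo (k r a b t : ℕ) (h1 : 1 ≤ t) (h2 : t ≤ a) : Farr k r (2, a, b) t = k := by
  simp only [Farr]; norm_num; split_ifs <;> omega

lemma Farr2_mid (k r a b : ℕ) : Farr k r (2, a, b) (a + 1) = b := by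
  simp only [Farr]; norm_num

lemma Farr2_hi (k r a b t : ℕ) (h1 : a + 1 < t) : Farr k r (2, a, b) t = 0 := by
  simp only [Farr]; norm_num; split_ifs <;> omega

/-- Parameter set for `Farr`. -/
def Sarr (k r : ℕ) : Finset (ℕ × ℕ × ℕ) :=
  ({0} ×ˢ Finset.range (k+1) ×ˢ {0}) ∪
  ({1} ×ˢ Finset.Icc 1 (k-1) ×ˢ Finset.Icc 1 (r-1)) ∪
  ({2} ×ˢ Finset.range (r-1) ×ˢ Finset.Icc 1 k)

lemma mem_Sarr (k r i a c : ℕ) :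
    (i, a, c) ∈ Sarr k r ↔
      (i = 0 ∧ a < k + 1 ∧ c = 0) ∨
      (i = 1 ∧ (1 ≤ a ∧ a ≤ k - 1) ∧ (1 ≤ c ∧ c ≤ r - 1)) ∨
      (i = 2 ∧ a < r - 1 ∧ (1 ≤ c ∧ c ≤ k)) := by
  simp only [Sarr, Finset.mem_union, Finset.mem_product, Finset.mem_singleton,
    Finset.mem_range, Finset.mem_Icc]
  tauto

lemma Farr_isArrow (n r : ℕ) (hr : 1 ≤ r) (hrn : r < n) (p : ℕ × ℕ × ℕ)
    (hp : p ∈ Sarr (n - r) r) : IsArrowPartition n r (Farr (n - r) r p) := by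
  obtain ⟨i, a, c⟩ := p
  rw [mem_Sarr] at hp
  rcases hp with ⟨hi, ha, hc⟩ | ⟨hi, ⟨ha1, ha2⟩, hc1, hc2⟩ | ⟨hi, ha, hc1, hc2⟩
  · subst hi; subst hc
    refine ⟨⟨Farr_zero _ _ _, ?_, ?_⟩, Or.inl ⟨a, by omega, ?_⟩⟩
    · intro t ht; exact Farr0_hi _ _ _ _ _ ht
    · intro t; simp only [Farr]; norm_num; split_ifs <;> omega
    · intro t ht1 ht2; exact Farr0_mid _ _ _ _ _ (by omega) ht2
  · subst hi
    refine ⟨⟨Farr_zero _ _ _, ?_, ?_⟩,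
      Or.inr (Or.inl ⟨a, c, ha1, by omega, hc1, by omega, ?_, ?_⟩)⟩
    · intro t ht; exact Farr1_hi _ _ _ _ _ (by omega) ht
    · intro t; simp only [Farr]; norm_num; split_ifs <;> omega
    · intro t ht1 ht2; exact Farr1_lo _ _ _ _ _ ht1 ht2
    · intro t ht1 ht2; exact Farr1_mid _ _ _ _ _ (by omega) ht2
  · subst hi
    refine ⟨⟨Farr_zero _ _ _, ?_, ?_⟩,
      Or.inr (Or.inr ⟨a, c, by omega, hc1, hc2, ?_, ?_, ?_⟩)⟩
    · intro t ht; exact Farr2_hi _ _ _ _ _ (by omega)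
    · intro t; simp only [Farr]; norm_num; split_ifs <;> omega
    · intro t ht1 ht2; exact Farr2_lo _ _ _ _ _ ht1 ht2
    · exact Farr2_mid _ _ _ _
    · intro t ht1 ht2; exact Farr2_hi _ _ _ _ _ (by omega)

lemma arrow_mem_image (n r : ℕ) (hr : 1 ≤ r) (hrn : r < n) (lam : ℕ → ℕ)
    (h : IsArrowPartition n r lam) :
    ∃ p ∈ Sarr (n - r) r, Farr (n - r) r p = lam := by
  obtain ⟨⟨h0, hgt, hmono⟩, hcase⟩ := h
  rcases hcase with ⟨a, ha, hv⟩ | ⟨a, c, ha1, ha2, hc1, hc2, hv1, hv2⟩ |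
    ⟨a, b, har, hb1, hb2, hv1, hv2, hv3⟩
  · refine ⟨(0, a, 0), ?_, ?_⟩
    · rw [mem_Sarr]; left; exact ⟨rfl, by omega, rfl⟩
    · funext t
      by_cases h1 : t = 0
      · subst h1; rw [Farr_zero]; exact h0.symm
      · by_cases h2 : t ≤ r
        · rw [Farr0_mid _ _ _ _ _ h1 h2, hv t (by omega) h2]
        · rw [Farr0_hi _ _ _ _ _ (by omega), hgt t (by omega)]
  · refine ⟨(1, a, c), ?_, ?_⟩
    · rw [mem_Sarr]; right; left; exact ⟨rfl, ⟨ha1, by omega⟩, hc1, by omega⟩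
    · funext t
      by_cases h1 : t = 0
      · subst h1; rw [Farr_zero]; exact h0.symm
      · by_cases h2 : t ≤ c
        · rw [Farr1_lo _ _ _ _ _ (by omega) h2, hv1 t (by omega) h2]
        · by_cases h3 : t ≤ r
          · rw [Farr1_mid _ _ _ _ _ (by omega) h3, hv2 t (by omega) h3]
          · rw [Farr1_hi _ _ _ _ _ (by omega) (by omega), hgt t (by omega)]
  · refine ⟨(2, a, b), ?_, ?_⟩
    · rw [mem_Sarr]; right; right; exact ⟨rfl, by omega, hb1, hb2⟩
    · funext t
      by_cases h1 : t = 0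
      · subst h1; rw [Farr_zero]; exact h0.symm
      · by_cases h2 : t ≤ a
        · rw [Farr2_lo _ _ _ _ _ (by omega) h2, hv1 t (by omega) h2]
        · by_cases h3 : t = a + 1
          · subst h3; rw [Farr2_mid, hv2]
          · by_cases h4 : t ≤ r
            · rw [Farr2_hi _ _ _ _ _ (by omega), hv3 t (by omega) h4]
            · rw [Farr2_hi _ _ _ _ _ (by omega), hgt t (by omega)]

lemma Farr_injOn (n r : ℕ) (hr : 1 ≤ r) (hrn : r < n) :
    Set.InjOn (Farr (n - r) r) (Sarr (n - r) r) := by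
  have hk1 : 1 ≤ n - r := by omega
  rintro ⟨i, a, c⟩ hp ⟨j, a', c'⟩ hq h
  rw [Finset.mem_coe, mem_Sarr] at hp hq
  rcases hp with ⟨hi, ha, hc⟩ | ⟨hi, ⟨ha1, ha2⟩, hc1, hc2⟩ | ⟨hi, ha, hc1, hc2⟩ <;>
    rcases hq with ⟨hj, ha', hc'⟩ | ⟨hj, ⟨ha1', ha2'⟩, hc1', hc2'⟩ | ⟨hj, ha', hc1', hc2'⟩ <;>
      subst hi <;> subst hj <;> simp only [Prod.mk.injEq, true_and]
  · -- 0 vs 0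
    have h1 := congrFun h 1
    rw [Farr0_mid _ _ _ _ _ one_ne_zero hr, Farr0_mid _ _ _ _ _ one_ne_zero hr] at h1
    omega
  · -- 0 vs 1
    have h1 := congrFun h 1
    have h2 := congrFun h r
    rw [Farr0_mid _ _ _ _ _ one_ne_zero hr, Farr1_lo _ _ _ _ _ le_rfl hc1'] at h1
    rw [Farr0_mid _ _ _ _ _ (by omega) le_rfl, Farr1_mid _ _ _ _ _ (by omega) le_rfl] at h2
    omega
  · -- 0 vs 2
    have h1 := congrFun h 1
    have h2 := congrFun h r
    rw [Farr0_mid _ _ _ _ _ (by omega) le_rfl, Farr2_hi _ _ _ _ _ (by omega)] at h2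
    by_cases ha0 : a' = 0
    · subst ha0
      rw [Farr0_mid _ _ _ _ _ one_ne_zero hr, Farr2_mid] at h1
      omega
    · rw [Farr0_mid _ _ _ _ _ one_ne_zero hr, Farr2_lo _ _ _ _ _ le_rfl (by omega)] at h1
      omega
  · -- 1 vs 0
    have h1 := congrFun h 1
    have h2 := congrFun h r
    rw [Farr0_mid _ _ _ _ _ one_ne_zero hr, Farr1_lo _ _ _ _ _ le_rfl hc1] at h1
    rw [Farr0_mid _ _ _ _ _ (by omega) le_rfl, Farr1_mid _ _ _ _ _ (by omega) le_rfl] at h2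
    omega
  · -- 1 vs 1
    have h2 := congrFun h r
    rw [Farr1_mid _ _ _ _ _ (by omega) le_rfl, Farr1_mid _ _ _ _ _ (by omega) le_rfl] at h2
    refine ⟨by omega, ?_⟩
    rcases lt_trichotomy c c' with hcc | hcc | hcc
    · have h3 := congrFun h (c + 1)
      rw [Farr1_mid _ _ _ _ _ (by omega) (by omega),
        Farr1_lo _ _ _ _ _ (by omega) (by omega)] at h3
      omega
    · exact hcc
    · have h3 := congrFun h (c' + 1)
      rw [Farr1_lo _ _ _ _ _ (by omega) (by omega),
        Farr1_mid _ _ _ _ _ (by omega) (by omega)] at h3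
      omega
  · -- 1 vs 2
    have h2 := congrFun h r
    rw [Farr1_mid _ _ _ _ _ (by omega) le_rfl, Farr2_hi _ _ _ _ _ (by omega)] at h2
    omega
  · -- 2 vs 0
    have h1 := congrFun h 1
    have h2 := congrFun h r
    rw [Farr0_mid _ _ _ _ _ (by omega) le_rfl, Farr2_hi _ _ _ _ _ (by omega)] at h2
    by_cases ha0 : a = 0
    · subst ha0
      rw [Farr0_mid _ _ _ _ _ one_ne_zero hr, Farr2_mid] at h1
      omega
    · rw [Farr0_mid _ _ _ _ _ one_ne_zero hr, Farr2_lo _ _ _ _ _ le_rfl (by omega)] at h1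
      omega
  · -- 2 vs 1
    have h2 := congrFun h r
    rw [Farr1_mid _ _ _ _ _ (by omega) le_rfl, Farr2_hi _ _ _ _ _ (by omega)] at h2
    omega
  · -- 2 vs 2
    have hac : a = a' := by
      rcases lt_trichotomy a a' with hcc | hcc | hcc
      · have h3 := congrFun h (a' + 1)
        rw [Farr2_hi _ _ _ _ _ (by omega), Farr2_mid] at h3
        omega
      · exact hcc
      · have h3 := congrFun h (a + 1)
        rw [Farr2_mid, Farr2_hi _ _ _ _ _ (by omega)] at h3
        omega
    subst hac
    have h3 := congrFun h (a + 1)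
    rw [Farr2_mid, Farr2_mid] at h3
    omega

/-- the set `𝒜(n,r)` of arrow partitions has exactly
`2(r-1)(n-r-1) + n` elements. -/
theorem card_arrow_partitions (n r : ℕ) (hr : 1 ≤ r) (hrn : r < n) :
    {lam : ℕ → ℕ | IsArrowPartition n r lam}.ncard =
      2 * (r - 1) * (n - r - 1) + n := by
  have hset : {lam : ℕ → ℕ | IsArrowPartition n r lam} =
      Farr (n - r) r '' (Sarr (n - r) r : Set (ℕ × ℕ × ℕ)) := by
    ext lam
    constructor
    · intro hl
      obtain ⟨p, hp, he⟩ := arrow_mem_image n r hr hrn lam hl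
      exact ⟨p, hp, he⟩
    · rintro ⟨p, hp, rfl⟩
      exact Farr_isArrow n r hr hrn p hp
  rw [hset, Set.ncard_image_of_injOn (Farr_injOn n r hr hrn), Set.ncard_coe_finset]
  have hd1 : Disjoint (({0} ×ˢ Finset.range (n - r + 1) ×ˢ {0} : Finset (ℕ × ℕ × ℕ)))
      ({1} ×ˢ Finset.Icc 1 (n - r - 1) ×ˢ Finset.Icc 1 (r - 1)) := by
    rw [Finset.disjoint_left]
    rintro ⟨i, a, c⟩ hp hq
    simp [Finset.mem_product] at hp hq
    omega
  have hd2 : Disjoint (({0} ×ˢ Finset.range (n - r + 1) ×ˢ {0} : Finset (ℕ × ℕ × ℕ)) ∪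
      ({1} ×ˢ Finset.Icc 1 (n - r - 1) ×ˢ Finset.Icc 1 (r - 1)))
      ({2} ×ˢ Finset.range (r - 1) ×ˢ Finset.Icc 1 (n - r)) := by
    rw [Finset.disjoint_left]
    rintro ⟨i, a, c⟩ hp hq
    simp [Finset.mem_product] at hp hq
    omega
  rw [Sarr, Finset.card_union_of_disjoint hd2, Finset.card_union_of_disjoint hd1]
  simp only [Finset.card_product, Finset.card_singleton, Finset.card_range, Nat.card_Icc]
  obtain ⟨r1, rfl⟩ : ∃ r1, r = r1 + 1 := ⟨r - 1, by omega⟩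
  obtain ⟨k1, rfl⟩ : ∃ k1, n = r1 + 1 + (k1 + 1) := ⟨n - (r1 + 1) - 1, by omega⟩
  simp only [show r1 + 1 + (k1 + 1) - (r1 + 1) = k1 + 1 from by omega,
    Nat.add_sub_cancel]
  ring
end
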